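/- arXiv:2307.10280 — 6 statements merged into one kernel-verified Lean document; each statement's English description precedes it below -/
import Mathlib

section
/- For any ε > 0 there is a constant c(ε) > 0 such that for every nonzero polynomial f over a finite field F_q of degree at least 2, the number of monic divisors τ(f) of f satisfies τ(f) ≤ c(ε) · q^{(2+ε)·deg(f)/log(deg f)}. -/
open Polynomial

section Aux

lemma self_le_20_exp (L : ℝ) : L ≤ 20 * Real.exp (0.05 * L) := by
  have h := Real.add_one_le_exp (0.05 * L)
  nlinarith [Real.exp_pos (0.05 * L)]

lemma numeric_bound (ε : ℝ) (hε : 0 < ε) : ∃ c : ℝ, 0 < c ∧ ∀ L Q : ℝ,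
    Real.log 2 ≤ L → Real.log 2 ≤ Q →
    (L ^ 2 + 2 * L) * Real.exp (Real.log 2 * L / 2) ≤
      Real.log c + ε * Q * Real.exp L / L := by
  have hlog2 : (0:ℝ) < Real.log 2 := Real.log_pos (by norm_num)
  set M : ℝ := 2 * Real.log (8800 / (ε * Real.log 2)) with hM
  refine ⟨Real.exp (440 * Real.exp (M / 2) + 1), Real.exp_pos _, ?_⟩
  intro L Q hL hQ
  have hL0 : 0 < L := lt_of_lt_of_le hlog2 hL
  have hQ0 : 0 < Q := lt_of_lt_of_le hlog2 hQ
  rw [Real.log_exp]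
  have h20 : L ≤ 20 * Real.exp (0.05 * L) := self_le_20_exp L
  have hexp05 : Real.exp (0.05 * L) ≤ Real.exp (0.1 * L) :=
    Real.exp_le_exp.2 (by nlinarith)
  have hsq : L ^ 2 + 2 * L ≤ 440 * Real.exp (0.1 * L) := by
    have h1 : L ^ 2 ≤ 400 * Real.exp (0.1 * L) := by
      have : L ^ 2 ≤ (20 * Real.exp (0.05 * L)) ^ 2 := by
        nlinarith [Real.exp_pos (0.05 * L)]
      calc L ^ 2 ≤ (20 * Real.exp (0.05 * L)) ^ 2 := this
        _ = 400 * (Real.exp (0.05 * L) * Real.exp (0.05 * L)) := by ring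
        _ = 400 * Real.exp (0.1 * L) := by rw [← Real.exp_add]; norm_num; ring_nf
    nlinarith [Real.exp_pos (0.05 * L)]
  have hmid : Real.exp (Real.log 2 * L / 2) ≤ Real.exp (0.35 * L) := by
    apply Real.exp_le_exp.2
    have : Real.log 2 ≤ 0.7 := by
      have := Real.log_two_lt_d9
      norm_num at this ⊢; linarith
    nlinarith
  have hLHS : (L ^ 2 + 2 * L) * Real.exp (Real.log 2 * L / 2) ≤
      440 * Real.exp (0.45 * L) := by
    calc (L ^ 2 + 2 * L) * Real.exp (Real.log 2 * L / 2)
        ≤ (440 * Real.exp (0.1 * L)) * Real.exp (0.35 * L) := by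
          apply mul_le_mul hsq hmid (Real.exp_pos _).le
          positivity
      _ = 440 * Real.exp (0.45 * L) := by
          rw [mul_assoc, ← Real.exp_add]; norm_num; ring_nf
  have hrpos : 0 ≤ ε * Q * Real.exp L / L := by positivity
  rcases le_or_gt L M with hcase | hcase
  · -- small L
    have hM0 : 0 < M := lt_of_lt_of_le hL0 hcase
    have : Real.exp (0.45 * L) ≤ Real.exp (M / 2) := by
      apply Real.exp_le_exp.2; nlinarith
    nlinarith
  · -- large L
    have hpos : (0:ℝ) < 8800 / (ε * Real.log 2) := by positivity
    have hexpM : Real.exp (M / 2) = 8800 / (ε * Real.log 2) := by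
      rw [hM]; rw [show 2 * Real.log (8800 / (ε * Real.log 2)) / 2
        = Real.log (8800 / (ε * Real.log 2)) by ring]
      exact Real.exp_log hpos
    have hkey : 440 * Real.exp (0.45 * L) ≤ ε * Real.log 2 * Real.exp (0.95 * L) / 20 := by
      have h1 : 8800 / (ε * Real.log 2) ≤ Real.exp (0.5 * L) := by
        rw [← hexpM]
        apply Real.exp_le_exp.2; linarith
      have h2 : 8800 ≤ ε * Real.log 2 * Real.exp (0.5 * L) := by
        rw [div_le_iff₀ (by positivity)] at h1
        nlinarith [Real.exp_pos (0.5 * L)]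
      have h3 : Real.exp (0.95 * L) = Real.exp (0.45 * L) * Real.exp (0.5 * L) := by
        rw [← Real.exp_add]; norm_num; ring_nf
      rw [h3]
      rw [le_div_iff₀ (by norm_num : (0:ℝ) < 20)]
      nlinarith [Real.exp_pos (0.45 * L), Real.exp_pos (0.5 * L)]
    have hfin : ε * Real.log 2 * Real.exp (0.95 * L) / 20 ≤ ε * Q * Real.exp L / L := by
      have hL20 : L ≤ 20 * Real.exp (0.05 * L) := h20
      have hE : Real.exp L = Real.exp (0.95 * L) * Real.exp (0.05 * L) := by
        rw [← Real.exp_add]; norm_num; ring_nf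
      rw [div_le_div_iff₀ (by norm_num) hL0, hE]
      have h1 : ε * Real.log 2 * Real.exp (0.95 * L) * L ≤
          ε * Real.log 2 * Real.exp (0.95 * L) * (20 * Real.exp (0.05 * L)) := by
        apply mul_le_mul_of_nonneg_left hL20 (by positivity)
      calc ε * Real.log 2 * Real.exp (0.95 * L) * L
          ≤ ε * Real.log 2 * Real.exp (0.95 * L) * (20 * Real.exp (0.05 * L)) := h1
        _ = ε * Real.log 2 * (Real.exp (0.95 * L) * Real.exp (0.05 * L)) * 20 := by ring
        _ ≤ ε * Q * (Real.exp (0.95 * L) * Real.exp (0.05 * L)) * 20 := by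
            apply mul_le_mul_of_nonneg_right _ (by norm_num)
            apply mul_le_mul_of_nonneg_right _ (by positivity)
            exact mul_le_mul_of_nonneg_left hQ hε.le
    nlinarith [Real.exp_pos (M/2)]


variable {Fq : Type} [Field Fq] [Fintype Fq] [DecidableEq Fq]

open UniqueFactorizationMonoid in
lemma monic_of_normalized_factor {g p : Polynomial Fq} (hp : p ∈ normalizedFactors g) :
    p.Monic := by
  classical
  have h1 := normalize_normalized_factor p hp
  have h2 := irreducible_of_normalized_factor p hp
  have := Polynomial.monic_normalize (p := p) h2.ne_zero
  rwa [h1] at this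

open UniqueFactorizationMonoid in
lemma prod_nf_eq {g : Polynomial Fq} (hg : g.Monic) :
    (normalizedFactors g).prod = g := by
  classical
  refine Polynomial.eq_of_monic_of_associated ?_ hg (prod_normalizedFactors hg.ne_zero)
  have : Monic ((normalizedFactors g).map id).prod :=
    Polynomial.monic_multiset_prod_of_monic _ id fun i hi => monic_of_normalized_factor hi
  simpa using this

end Aux

set_option maxHeartbeats 1000000 in
/-- For any `ε > 0` there is a constant `c(ε) > 0` such that for every nonzero
polynomial `f` over a finite field `F_q` of degree at least `2`, the number of
monic divisors `τ(f)` of `f` satisfies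
`τ(f) ≤ c(ε) · q^((2+ε)·deg f / log (deg f))`. -/
theorem divisor_count_bound :
    ∀ ε : ℝ, 0 < ε → ∃ c : ℝ, 0 < c ∧
      ∀ (Fq : Type) [Field Fq] [Fintype Fq] (f : Polynomial Fq)
        (D : Finset (Polynomial Fq)),
        f ≠ 0 → 2 ≤ f.natDegree →
        (∀ d, d ∈ D ↔ d.Monic ∧ d ∣ f) →
        (D.card : ℝ) ≤ c * (Fintype.card Fq : ℝ) ^
          ((2 + ε) * (f.natDegree : ℝ) / Real.log (f.natDegree : ℝ)) := by
  classical
  intro ε hε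
  obtain ⟨c, hc, hnum⟩ := numeric_bound ε hε
  refine ⟨c, hc, ?_⟩
  intro Fq _ _ f D hf hn hD
  classical
  set q : ℕ := Fintype.card Fq with hqdef
  have hq : 2 ≤ q := Fintype.one_lt_card
  set n : ℕ := f.natDegree with hndef
  have hn2R : (2:ℝ) ≤ (n:ℝ) := by exact_mod_cast hn
  have hnpos : (0:ℝ) < n := by linarith
  have hqR : (2:ℝ) ≤ (q:ℝ) := by exact_mod_cast hq
  set L : ℝ := Real.log n with hLdef
  set Q : ℝ := Real.log q with hQdef
  have hlog2 : (0:ℝ) < Real.log 2 := Real.log_pos (by norm_num)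
  have hL : Real.log 2 ≤ L := Real.log_le_log (by norm_num) hn2R
  have hQ : Real.log 2 ≤ Q := Real.log_le_log (by norm_num) hqR
  have hL0 : 0 < L := lt_of_lt_of_le hlog2 hL
  have hQ0 : 0 < Q := lt_of_lt_of_le hlog2 hQ
  set x : ℝ := Real.log 2 * L / (2 * Q) with hxdef
  have hx0 : 0 ≤ x := by positivity
  set D0 : ℕ := ⌊x⌋₊ + 1 with hD0def
  have hD0pos : 0 < D0 := Nat.succ_pos _
  have hD0lb : x < (D0 : ℝ) := by
    have := Nat.lt_floor_add_one x
    push_cast [hD0def]; push_cast at this; linarith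
  have hD0ub : (D0 : ℝ) ≤ x + 1 := by
    have := Nat.floor_le hx0
    push_cast [hD0def]; linarith
  -- multisets of factors
  set m : Multiset (Polynomial Fq) := UniqueFactorizationMonoid.normalizedFactors f with hmdef
  set m₁ : Multiset (Polynomial Fq) := m.filter (fun r => r.natDegree < D0) with hm1def
  set m₂ : Multiset (Polynomial Fq) := m.filter (fun r => ¬ r.natDegree < D0) with hm2def
  have hmonicm : ∀ p ∈ m, p.Monic := fun p hp => monic_of_normalized_factor hp
  have hdeg1 : ∀ p ∈ m, 1 ≤ p.natDegree := fun p hp =>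
    (UniqueFactorizationMonoid.irreducible_of_normalized_factor p hp).natDegree_pos
  have hsum : (m.map Polynomial.natDegree).sum = n := by
    have hassoc : Associated m.prod f :=
      UniqueFactorizationMonoid.prod_normalizedFactors hf
    have hprodne : m.prod ≠ 0 := fun h => hf (by
      have := hassoc.dvd
      rw [h] at this
      exact zero_dvd_iff.mp this)
    have h1 : m.prod.natDegree = (m.map Polynomial.natDegree).sum :=
      Polynomial.natDegree_multiset_prod_of_monic _ hmonicm
    have h2 : m.prod.natDegree = n :=
      le_antisymm (Polynomial.natDegree_le_of_dvd hassoc.dvd hf)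
        (Polynomial.natDegree_le_of_dvd hassoc.symm.dvd hprodne)
    rw [← h1, h2]
  have hcardm : Multiset.card m ≤ n := by
    have : Multiset.card (m.map Polynomial.natDegree) • 1 ≤ (m.map Polynomial.natDegree).sum :=
      Multiset.card_nsmul_le_sum (by
        intro y hy
        obtain ⟨p, hp, rfl⟩ := Multiset.mem_map.mp hy
        exact hdeg1 p hp)
    simpa [hsum] using this
  set k₂ : ℕ := Multiset.card m₂ with hk2def
  have hk2 : D0 * k₂ ≤ n := by
    have h1 : Multiset.card (m₂.map Polynomial.natDegree) • D0 ≤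
        (m₂.map Polynomial.natDegree).sum :=
      Multiset.card_nsmul_le_sum (by
        intro y hy
        obtain ⟨p, hp, rfl⟩ := Multiset.mem_map.mp hy
        have := (Multiset.mem_filter.mp hp).2
        omega)
    have h2 : (m₂.map Polynomial.natDegree).sum ≤ (m.map Polynomial.natDegree).sum := by
      obtain ⟨u, hu⟩ := Multiset.le_iff_exists_add.mp
        (Multiset.map_le_map (s := m₂) (t := m) (Multiset.filter_le _ m))
      rw [hu, Multiset.sum_add]
      exact Nat.le_add_right _ _
    rw [hsum] at h2
    calc D0 * k₂ = Multiset.card (m₂.map Polynomial.natDegree) • D0 := by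
          rw [Multiset.card_map]; rw [smul_eq_mul]; ring
      _ ≤ n := le_trans h1 h2
  set σ : ℕ := m₁.toFinset.card with hσdef
  -- bound on σ
  have hσbound : σ ≤ D0 * q ^ (D0 - 1) := by
    have hinj : m₁.toFinset.card ≤ Fintype.card (Fin D0 × (Fin (D0 - 1) → Fq)) := by
      have := Finset.card_le_card_of_injOn
        (f := fun p : Polynomial Fq =>
          ((⟨p.natDegree % D0, Nat.mod_lt _ hD0pos⟩ : Fin D0),
            fun i : Fin (D0 - 1) => p.coeff i))
        (s := m₁.toFinset) (t := (Finset.univ : Finset (Fin D0 × (Fin (D0 - 1) → Fq))))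
        (fun a _ => Finset.mem_univ _) ?_
      · simpa [Finset.card_univ] using this
      · intro p₁ hp₁ p₂ hp₂ heq
        simp only [Finset.coe_insert, Set.mem_insert_iff, Finset.mem_coe,
          Multiset.mem_toFinset] at hp₁ hp₂
        have hm₁ : p₁ ∈ m₁ := by simpa [Multiset.mem_toFinset] using hp₁
        have hm₂ : p₂ ∈ m₁ := by simpa [Multiset.mem_toFinset] using hp₂
        have hd₁ : p₁.natDegree < D0 := (Multiset.mem_filter.mp hm₁).2
        have hd₂ : p₂.natDegree < D0 := (Multiset.mem_filter.mp hm₂).2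
        have hmon₁ : p₁.Monic := hmonicm _ (Multiset.mem_of_mem_filter hm₁)
        have hmon₂ : p₂.Monic := hmonicm _ (Multiset.mem_of_mem_filter hm₂)
        have h1 : p₁.natDegree = p₂.natDegree := by
          have h := congrArg Prod.fst heq
          simp only [Fin.mk.injEq] at h
          rwa [Nat.mod_eq_of_lt hd₁, Nat.mod_eq_of_lt hd₂] at h
        have h2 : ∀ i : Fin (D0 - 1), p₁.coeff i = p₂.coeff i := fun i =>
          congrFun (congrArg Prod.snd heq) i
        apply Polynomial.ext
        intro k
        rcases lt_trichotomy k p₁.natDegree with hk | hk | hk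
        · have hlt : k < D0 - 1 := by omega
          exact h2 ⟨k, hlt⟩
        · rw [hk, h1]
          rw [← h1]
          rw [hk] at *
          calc p₁.coeff p₁.natDegree = 1 := hmon₁
            _ = p₂.coeff p₂.natDegree := hmon₂.symm
            _ = p₂.coeff p₁.natDegree := by rw [h1]
        · rw [Polynomial.coeff_eq_zero_of_natDegree_lt hk,
            Polynomial.coeff_eq_zero_of_natDegree_lt (h1 ▸ hk)]
    have hcard : Fintype.card (Fin D0 × (Fin (D0 - 1) → Fq)) = D0 * q ^ (D0 - 1) := by
      simp [hqdef]
    omega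
  have hcount : D.card ≤ (n + 1) ^ σ * 2 ^ k₂ := by
    set B : Finset ((↥m₁.toFinset → ℕ) × Multiset (Polynomial Fq)) :=
      (Fintype.piFinset fun _ : ↥m₁.toFinset => Finset.range (n + 1)) ×ˢ m₂.powerset.toFinset
      with hBdef
    have hmain : D.card ≤ B.card := by
      apply Finset.card_le_card_of_injOn
        (fun d => ((fun p : ↥m₁.toFinset =>
            (UniqueFactorizationMonoid.normalizedFactors d).count ↑p),
          (UniqueFactorizationMonoid.normalizedFactors d).filter
            (fun r => ¬ r.natDegree < D0)))
      · intro d hd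
        obtain ⟨hdm, hddvd⟩ := (hD d).mp hd
        have hd0 : d ≠ 0 := hdm.ne_zero
        have hle : UniqueFactorizationMonoid.normalizedFactors d ≤ m :=
          (UniqueFactorizationMonoid.dvd_iff_normalizedFactors_le_normalizedFactors
            hd0 hf).mp hddvd
        rw [Finset.mem_coe, hBdef, Finset.mem_product]
        constructor
        · rw [Fintype.mem_piFinset]
          intro p
          rw [Finset.mem_range]
          show Multiset.count (↑p) (UniqueFactorizationMonoid.normalizedFactors d) < n + 1
          have l1 : (UniqueFactorizationMonoid.normalizedFactors d).count ↑p ≤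
              m.count ↑p := Multiset.count_le_of_le _ hle
          have l2 : m.count ↑p ≤ Multiset.card m := Multiset.count_le_card _ _
          omega
        · rw [Multiset.mem_toFinset, Multiset.mem_powerset]
          exact Multiset.filter_le_filter _ hle
      · intro d₁ hd₁ d₂ hd₂ heq
        have hd₁' := (hD d₁).mp hd₁
        have hd₂' := (hD d₂).mp hd₂
        obtain ⟨hdm₁, hdvd₁⟩ := hd₁'
        obtain ⟨hdm₂, hdvd₂⟩ := hd₂'
        have hle₁ : UniqueFactorizationMonoid.normalizedFactors d₁ ≤ m :=
          (UniqueFactorizationMonoid.dvd_iff_normalizedFactors_le_normalizedFactors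
            hdm₁.ne_zero hf).mp hdvd₁
        have hle₂ : UniqueFactorizationMonoid.normalizedFactors d₂ ≤ m :=
          (UniqueFactorizationMonoid.dvd_iff_normalizedFactors_le_normalizedFactors
            hdm₂.ne_zero hf).mp hdvd₂
        have h1 := congrArg Prod.fst heq
        have h2 := congrArg Prod.snd heq
        simp only at h1 h2
        have hnf : UniqueFactorizationMonoid.normalizedFactors d₁ =
            UniqueFactorizationMonoid.normalizedFactors d₂ := by
          refine Multiset.ext.mpr fun p => ?_
          by_cases hp : p.natDegree < D0
          · by_cases hpm : p ∈ m₁.toFinset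
            · exact congrFun h1 ⟨p, hpm⟩
            · have hpm' : p ∉ m := fun h =>
                hpm (Multiset.mem_toFinset.mpr (Multiset.mem_filter.mpr ⟨h, hp⟩))
              have e0 : m.count p = 0 := Multiset.count_eq_zero.mpr hpm'
              have l1 := Multiset.count_le_of_le p hle₁
              have l2 := Multiset.count_le_of_le p hle₂
              omega
          · have e1 := congrArg (Multiset.count p) h2
            rwa [Multiset.count_filter, Multiset.count_filter, if_pos hp, if_pos hp] at e1
        calc d₁ = (UniqueFactorizationMonoid.normalizedFactors d₁).prod :=
              (prod_nf_eq hdm₁).symm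
          _ = (UniqueFactorizationMonoid.normalizedFactors d₂).prod := by rw [hnf]
          _ = d₂ := prod_nf_eq hdm₂
    have hBcard : B.card ≤ (n + 1) ^ σ * 2 ^ k₂ := by
      rw [hBdef, Finset.card_product, Fintype.card_piFinset]
      have e1 : (∏ _i : ↥m₁.toFinset, (Finset.range (n + 1)).card) = (n + 1) ^ σ := by
        simp [Finset.card_range, Finset.prod_const, Finset.card_univ, hσdef]
      rw [e1]
      apply Nat.mul_le_mul_left
      calc m₂.powerset.toFinset.card ≤ Multiset.card m₂.powerset :=
            Multiset.toFinset_card_le _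
        _ = 2 ^ k₂ := by rw [Multiset.card_powerset]
    omega
  -- real estimates
  have hσR : (σ : ℝ) ≤ (L / 2 + 1) * Real.exp (Real.log 2 * L / 2) := by
    have h1 : (σ : ℝ) ≤ (D0 : ℝ) * (q : ℝ) ^ (D0 - 1 : ℕ) := by exact_mod_cast hσbound
    have hq0R : (0:ℝ) < q := by linarith
    have h2 : ((q : ℝ)) ^ (D0 - 1 : ℕ) = Real.exp (((D0 - 1 : ℕ) : ℝ) * Q) := by
      rw [← Real.exp_log (pow_pos hq0R _), Real.log_pow]
    have h3 : ((D0 - 1 : ℕ) : ℝ) * Q ≤ Real.log 2 * L / 2 := by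
      have e2 : ((D0 - 1 : ℕ) : ℝ) = (⌊x⌋₊ : ℝ) := by
        rw [hD0def]
        push_cast [Nat.add_sub_cancel]
        ring
      rw [e2]
      have hfl := Nat.floor_le hx0
      calc (⌊x⌋₊ : ℝ) * Q ≤ x * Q := mul_le_mul_of_nonneg_right hfl hQ0.le
        _ = Real.log 2 * L / 2 := by rw [hxdef]; field_simp
    have h4 : (D0 : ℝ) ≤ L / 2 + 1 := by
      have hxle : x ≤ L / 2 := by
        rw [hxdef, div_le_iff₀ (by positivity)]
        nlinarith
      linarith
    calc (σ : ℝ) ≤ (D0 : ℝ) * (q : ℝ) ^ (D0 - 1 : ℕ) := h1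
      _ = (D0 : ℝ) * Real.exp (((D0 - 1 : ℕ) : ℝ) * Q) := by rw [h2]
      _ ≤ (L / 2 + 1) * Real.exp (Real.log 2 * L / 2) := by
          apply mul_le_mul h4 (Real.exp_le_exp.mpr h3) (Real.exp_pos _).le
          positivity
  have hNexp : Real.exp L = (n : ℝ) := Real.exp_log hnpos
  have key1 : ((n : ℝ) + 1) ^ σ ≤ c * Real.exp (ε * Q * (n : ℝ) / L) := by
    have hlogn1 : Real.log ((n : ℝ) + 1) ≤ 2 * L := by
      have hle : (n : ℝ) + 1 ≤ (n : ℝ) ^ 2 := by nlinarith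
      calc Real.log ((n : ℝ) + 1) ≤ Real.log ((n : ℝ) ^ 2) :=
            Real.log_le_log (by positivity) hle
        _ = 2 * L := by rw [Real.log_pow]; push_cast; ring
    have h5 : ((n : ℝ) + 1) ^ σ = Real.exp ((σ : ℝ) * Real.log ((n : ℝ) + 1)) := by
      rw [← Real.exp_log (pow_pos (by positivity) σ), Real.log_pow]
    rw [h5]
    have h6 : (σ : ℝ) * Real.log ((n : ℝ) + 1) ≤ Real.log c + ε * Q * (n : ℝ) / L := by
      have s1 : (σ : ℝ) * Real.log ((n : ℝ) + 1) ≤ (σ : ℝ) * (2 * L) :=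
        mul_le_mul_of_nonneg_left hlogn1 (Nat.cast_nonneg σ)
      have s2 : (σ : ℝ) * (2 * L) ≤ (L ^ 2 + 2 * L) * Real.exp (Real.log 2 * L / 2) := by
        have h := mul_le_mul_of_nonneg_right hσR (by positivity : (0:ℝ) ≤ 2 * L)
        calc (σ : ℝ) * (2 * L) ≤ ((L / 2 + 1) * Real.exp (Real.log 2 * L / 2)) * (2 * L) := h
          _ = (L ^ 2 + 2 * L) * Real.exp (Real.log 2 * L / 2) := by ring
      have s3 := hnum L Q hL hQ
      rw [hNexp] at s3
      linarith
    calc Real.exp ((σ : ℝ) * Real.log ((n : ℝ) + 1))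
        ≤ Real.exp (Real.log c + ε * Q * (n : ℝ) / L) := Real.exp_le_exp.mpr h6
      _ = c * Real.exp (ε * Q * (n : ℝ) / L) := by rw [Real.exp_add, Real.exp_log hc]
  have key2 : (2 : ℝ) ^ k₂ ≤ Real.exp (2 * Q * (n : ℝ) / L) := by
    have h7 : (2 : ℝ) ^ k₂ = Real.exp ((k₂ : ℝ) * Real.log 2) := by
      rw [← Real.exp_log (pow_pos two_pos k₂), Real.log_pow]
    rw [h7]
    apply Real.exp_le_exp.mpr
    have hD0k : (D0 : ℝ) * (k₂ : ℝ) ≤ (n : ℝ) := by exact_mod_cast hk2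
    have h9 : Real.log 2 * L ≤ 2 * Q * (D0 : ℝ) := by
      have hd := hD0lb
      rw [hxdef, div_lt_iff₀ (by positivity)] at hd
      nlinarith
    have h8 : (k₂ : ℝ) * Real.log 2 * L ≤ 2 * Q * (n : ℝ) := by
      calc (k₂ : ℝ) * Real.log 2 * L = (k₂ : ℝ) * (Real.log 2 * L) := by ring
        _ ≤ (k₂ : ℝ) * (2 * Q * (D0 : ℝ)) :=
            mul_le_mul_of_nonneg_left h9 (Nat.cast_nonneg _)
        _ = 2 * Q * ((D0 : ℝ) * (k₂ : ℝ)) := by ring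
        _ ≤ 2 * Q * (n : ℝ) := mul_le_mul_of_nonneg_left hD0k (by positivity)
    rw [le_div_iff₀ hL0]
    linarith
  calc (D.card : ℝ) ≤ (((n + 1) ^ σ * 2 ^ k₂ : ℕ) : ℝ) := by exact_mod_cast hcount
    _ = ((n : ℝ) + 1) ^ σ * (2 : ℝ) ^ k₂ := by push_cast; ring
    _ ≤ (c * Real.exp (ε * Q * (n : ℝ) / L)) * Real.exp (2 * Q * (n : ℝ) / L) := by
        apply mul_le_mul key1 key2 (by positivity) (by positivity)
    _ = c * Real.exp (ε * Q * (n : ℝ) / L + 2 * Q * (n : ℝ) / L) := by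
        rw [Real.exp_add]; ring
    _ = c * (q : ℝ) ^ ((2 + ε) * (n : ℝ) / L) := by
        rw [Real.rpow_def_of_pos (by linarith : (0:ℝ) < (q : ℝ))]
        congr 1
        rw [hQdef]
        ring
end

section
/- Let f be a polynomial over F_q with factorization f = g_1^{e_1}···g_k^{e_k} into distinct monic irreducibles. Then for any λ > 0, τ(f)/exp(λ·deg f) ≤ ∏_{i : deg g_i ≤ 1/λ} (e_i+1)/(1+λ e_i deg g_i), and since there are at most q^{1/λ} monic irreducible polynomials of degree at most 1/λ, one has τ(f) ≤ exp(λ·deg f) · exp(q^{1/λ} · log(1/λ)) whenever 0 < λ < 1. -/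
open Polynomial UniqueFactorizationMonoid


lemma irred_dvd' (Fq : Type) [Field Fq] [Fintype Fq] (g : Polynomial Fq)
    (hm : g.Monic) (hi : Irreducible g) :
    g ∣ X ^ (Fintype.card Fq ^ g.natDegree) - X := by
  haveI : Fact (Irreducible g) := ⟨hi⟩
  let K := AdjoinRoot g
  haveI : Module.Finite Fq K := (AdjoinRoot.powerBasis hi.ne_zero).finite
  haveI : Finite K := Module.finite_of_finite Fq
  haveI : Fintype K := Fintype.ofFinite K
  have hcard : Fintype.card K = Fintype.card Fq ^ g.natDegree := by
    rw [Module.card_eq_pow_finrank (K := Fq) (V := K),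
      (AdjoinRoot.powerBasis hi.ne_zero).finrank, AdjoinRoot.powerBasis_dim]
  have hroot : (AdjoinRoot.root g) ^ (Fintype.card Fq ^ g.natDegree) = AdjoinRoot.root g := by
    rw [← hcard]; exact FiniteField.pow_card _
  have := minpoly.dvd Fq (AdjoinRoot.root g) (p := X ^ (Fintype.card Fq ^ g.natDegree) - X) (by
    simp [hroot])
  rwa [AdjoinRoot.minpoly_root hi.ne_zero, hm.leadingCoeff, inv_one, map_one, mul_one] at this

lemma Sd_bound (Fq : Type) [Field Fq] [Fintype Fq] [DecidableEq (Polynomial Fq)]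
    (k : ℕ) (g : Fin k → Polynomial Fq)
    (hg : ∀ i, (g i).Monic ∧ Irreducible (g i))
    (hginj : Function.Injective g) (d : ℕ) :
    (Finset.univ.filter fun i => (g i).natDegree = d).card * d ≤ Fintype.card Fq ^ d := by
  classical
  rcases Nat.eq_zero_or_pos d with rfl | hd
  · simp
  have hq : 1 < Fintype.card Fq := Fintype.one_lt_card
  have hqd : 1 < Fintype.card Fq ^ d := Nat.one_lt_pow hd.ne' hq
  set s := Finset.univ.filter fun i => (g i).natDegree = d with hs
  have hcop : (↑s : Set (Fin k)).Pairwise (Function.onFun IsCoprime fun i => g i) := by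
    intro i _ j _ hij
    rcases (em' (g i ∣ g j)).imp_left (hg i).2.coprime_iff_not_dvd.2 with h | h
    · exact h
    · exfalso
      exact hij (hginj (eq_of_monic_of_associated (hg i).1 (hg j).1
        ((hg i).2.associated_of_dvd (hg j).2 h)))
  have hdvd : (∏ i ∈ s, g i) ∣ X ^ (Fintype.card Fq ^ d) - X := by
    refine Finset.prod_dvd_of_coprime hcop fun i hi => ?_
    have : (g i).natDegree = d := by
      rw [hs] at hi; exact (Finset.mem_filter.1 hi).2
    rw [← this]
    exact irred_dvd' Fq (g i) (hg i).1 (hg i).2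
  have hne : (X ^ (Fintype.card Fq ^ d) - X : Polynomial Fq) ≠ 0 :=
    FiniteField.X_pow_card_sub_X_ne_zero _ hqd
  have hdeg := Polynomial.natDegree_le_of_dvd hdvd hne
  rw [FiniteField.X_pow_card_sub_X_natDegree_eq _ hqd] at hdeg
  have hprod : (∏ i ∈ s, g i).natDegree = s.card * d := by
    rw [Polynomial.natDegree_prod _ _ fun i _ => (hg i).2.ne_zero]
    rw [Finset.sum_congr rfl fun i hi => (Finset.mem_filter.1 hi).2]
    simp [mul_comm, hs]
  omega

lemma geom_bound (q : ℕ) (hq : 2 ≤ q) (m : ℕ) :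
    ∑ d ∈ Finset.Icc 1 m, (q : ℝ) ^ d / d ≤ (q : ℝ) ^ m := by
  induction m with
  | zero => simp
  | succ m ih =>
    rw [show m + 1 = m + 1 from rfl, Finset.sum_Icc_succ_top (by omega)]
    rcases Nat.eq_zero_or_pos m with rfl | hm
    · simp
    have hqr : (2 : ℝ) ≤ (q : ℝ) := by exact_mod_cast hq
    have hq0 : (0 : ℝ) < q := by linarith
    have hqm : (0 : ℝ) < (q:ℝ)^m := by positivity
    have hm1 : (1 : ℝ) ≤ (m : ℝ) := by exact_mod_cast hm
    have key : (q : ℝ) ^ (m + 1) / ((m : ℝ) + 1) ≤ (q : ℝ) ^ (m + 1) - (q : ℝ) ^ m := by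
      rw [div_le_iff₀ (by positivity), pow_succ]
      nlinarith [mul_nonneg (mul_nonneg hqm.le (by linarith : (0:ℝ) ≤ (q:ℝ) - 2))
        (by linarith : (0:ℝ) ≤ (m:ℝ)), mul_nonneg hqm.le (by linarith : (0:ℝ) ≤ (m:ℝ) - 1)]
    push_cast
    push_cast at ih
    linarith [ih, key]


lemma tau_card (Fq : Type) [Field Fq] [DecidableEq (Polynomial Fq)]
    (k : ℕ) (g : Fin k → Polynomial Fq) (e : Fin k → ℕ)
    (hg : ∀ i, (g i).Monic ∧ Irreducible (g i))
    (hginj : Function.Injective g)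
    (f : Polynomial Fq) (hf : f = ∏ i, g i ^ e i)
    (D : Finset (Polynomial Fq)) (hD : ∀ d, d ∈ D ↔ d.Monic ∧ d ∣ f) :
    D.card = ∏ i, (e i + 1) := by
  classical
  have hgne : ∀ i, g i ≠ 0 := fun i => (hg i).2.ne_zero
  have hf0 : f ≠ 0 := by
    rw [hf]; exact Finset.prod_ne_zero_iff.2 fun i _ => pow_ne_zero _ (hgne i)
  -- normalizedFactors of products of powers
  have hnf : ∀ (a : Fin k → ℕ) (s : Finset (Fin k)),
      normalizedFactors (∏ i ∈ s, g i ^ a i) = ∑ i ∈ s, (a i) • ({g i} : Multiset _) := by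
    intro a s
    induction s using Finset.induction with
    | empty => simp
    | insert x s hx ih =>
      rw [Finset.prod_insert hx, Finset.sum_insert hx,
        normalizedFactors_mul (pow_ne_zero _ (hgne x))
          (Finset.prod_ne_zero_iff.2 fun i _ => pow_ne_zero _ (hgne i)),
        (hg x).2.normalizedFactors_pow, (hg x).1.normalize_eq_self, ih]
      simp [Multiset.nsmul_singleton]
  -- count formula
  have cnt : ∀ (a : Fin k → ℕ) (p : Polynomial Fq),
      Multiset.count p (∑ i, (a i) • ({g i} : Multiset (Polynomial Fq)))
        = if h : ∃ j, p = g j then a h.choose else 0 := by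
    intro a p
    rw [Multiset.count_sum']
    by_cases h : ∃ j, p = g j
    · rw [dif_pos h]
      rw [Finset.sum_eq_single h.choose]
      · simp [← h.choose_spec]
      · intro b _ hb
        have : p ≠ g b := fun hpb => hb (hginj (h.choose_spec ▸ hpb)).symm
        simp [Multiset.count_singleton, this]
      · simp
    · rw [dif_neg h]
      refine Finset.sum_eq_zero fun i _ => ?_
      have : p ≠ g i := fun hpb => h ⟨i, hpb⟩
      simp [Multiset.count_singleton, this]
  have cnt' : ∀ (a : Fin k → ℕ) (j : Fin k),
      Multiset.count (g j) (∑ i, (a i) • ({g i} : Multiset (Polynomial Fq))) = a j := by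
    intro a j
    rw [cnt]
    have h : ∃ j', g j = g j' := ⟨j, rfl⟩
    rw [dif_pos h]
    congr 1
    exact (hginj h.choose_spec).symm
  set φ : (∀ i, Fin (e i + 1)) → Polynomial Fq := fun a => ∏ i, g i ^ (a i : ℕ) with hφ
  have hmono : ∀ a, (φ a).Monic := fun a =>
    monic_prod_of_monic _ _ fun i _ => ((hg i).1).pow _
  have hmem : ∀ a, φ a ∈ D := by
    intro a
    rw [hD]
    refine ⟨hmono a, hf ▸ Finset.prod_dvd_prod_of_dvd _ _ fun i _ =>
      pow_dvd_pow _ (Nat.lt_succ_iff.1 (a i).isLt)⟩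
  have hinj : Function.Injective φ := by
    intro a b hab
    have := congrArg normalizedFactors hab
    rw [hφ] at this
    simp only [hnf] at this
    funext j
    have := congrArg (Multiset.count (g j)) this
    rw [cnt', cnt'] at this
    exact Fin.ext this
  have hsurj : ∀ d ∈ D, ∃ a, φ a = d := by
    intro d hd
    rw [hD] at hd
    obtain ⟨hdm, hddvd⟩ := hd
    have hd0 : d ≠ 0 := hdm.ne_zero
    have hle : normalizedFactors d ≤ normalizedFactors f :=
      (dvd_iff_normalizedFactors_le_normalizedFactors hd0 hf0).1 hddvd
    rw [hf, hnf e Finset.univ] at hle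
    have hale : ∀ i, Multiset.count (g i) (normalizedFactors d) ≤ e i := by
      intro i
      calc Multiset.count (g i) (normalizedFactors d)
          ≤ Multiset.count (g i) (∑ j, (e j) • ({g j} : Multiset _)) :=
            Multiset.count_le_of_le _ hle
        _ = e i := cnt' e i
    refine ⟨fun i => ⟨Multiset.count (g i) (normalizedFactors d),
      Nat.lt_succ_of_le (hale i)⟩, ?_⟩
    have hnfd : normalizedFactors d
        = ∑ i, (Multiset.count (g i) (normalizedFactors d)) • ({g i} : Multiset _) := by
      ext p
      rw [cnt]
      by_cases h : ∃ j, p = g j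
      · rw [dif_pos h]
        have hc : g h.choose = p := h.choose_spec.symm
        rw [hc]
      · rw [dif_neg h]
        by_contra hne
        have hpmem : p ∈ normalizedFactors d := by
          rw [← Multiset.count_pos]; omega
        have hpf : p ∈ ∑ j, (e j) • ({g j} : Multiset (Polynomial Fq)) :=
          Multiset.mem_of_le hle hpmem
        rw [Multiset.mem_sum] at hpf
        obtain ⟨j, _, hpj⟩ := hpf
        rw [Multiset.mem_nsmul] at hpj
        exact h ⟨j, Multiset.mem_singleton.1 hpj.2⟩
    have h1 : normalizedFactors (φ (fun i => ⟨Multiset.count (g i) (normalizedFactors d),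
        Nat.lt_succ_of_le (hale i)⟩)) = normalizedFactors d := by
      rw [hφ]
      simp only [hnf]
      exact hnfd.symm
    have h2 : Associated (φ _) d :=
      (associated_iff_normalizedFactors_eq_normalizedFactors
        (hmono _).ne_zero hd0).2 h1
    exact eq_of_monic_of_associated (hmono _) hdm h2
  have hcard : D.card = Fintype.card (∀ i, Fin (e i + 1)) := by
    rw [← Fintype.card_coe D]
    refine (Fintype.card_of_bijective (f := fun a => (⟨φ a, hmem a⟩ : D)) ⟨?_, ?_⟩).symm
    · intro a b hab
      exact hinj (congrArg Subtype.val hab)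
    · rintro ⟨d, hd⟩
      obtain ⟨a, ha⟩ := hsurj d hd
      exact ⟨a, Subtype.ext ha⟩
  rw [hcard]
  simp [Fintype.card_pi]


open scoped Classical in
/-- If `f = g₁^{e₁} ⋯ g_k^{e_k}` with distinct monic irreducibles `gᵢ`, then for
`λ > 0`, `τ(f)/exp(λ·deg f) ≤ ∏_{i : deg gᵢ ≤ 1/λ} (eᵢ+1)/(1+λ eᵢ deg gᵢ)`, and for
`0 < λ < 1`, `τ(f) ≤ exp(λ·deg f)·exp(q^{1/λ}·log(1/λ))`. -/
theorem tau_factorization_bound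
    (Fq : Type) [Field Fq] [Fintype Fq]
    (k : ℕ) (g : Fin k → Polynomial Fq) (e : Fin k → ℕ)
    (hg : ∀ i, (g i).Monic ∧ Irreducible (g i))
    (hginj : Function.Injective g)
    (he : ∀ i, 1 ≤ e i)
    (f : Polynomial Fq) (hf : f = ∏ i, g i ^ e i)
    (D : Finset (Polynomial Fq)) (hD : ∀ d, d ∈ D ↔ d.Monic ∧ d ∣ f)
    (l : ℝ) (hl : 0 < l) :
    (D.card : ℝ) / Real.exp (l * (f.natDegree : ℝ)) ≤
      (∏ i ∈ Finset.univ.filter (fun i => ((g i).natDegree : ℝ) ≤ 1 / l),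
        ((e i : ℝ) + 1) / (1 + l * (e i : ℝ) * ((g i).natDegree : ℝ))) ∧
    (l < 1 →
      (D.card : ℝ) ≤ Real.exp (l * (f.natDegree : ℝ)) *
        Real.exp ((Fintype.card Fq : ℝ) ^ ((1 : ℝ) / l) * Real.log (1 / l))) := by
  classical
  have hdeg1 : ∀ i, 1 ≤ (g i).natDegree := fun i => (hg i).2.natDegree_pos
  have hdegf : (f.natDegree : ℝ) = ∑ i, (e i : ℝ) * ((g i).natDegree : ℝ) := by
    rw [hf, Polynomial.natDegree_prod _ _ (fun i _ => pow_ne_zero _ (hg i).2.ne_zero)]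
    push_cast
    simp [Polynomial.natDegree_pow]
  have hcardD : (D.card : ℝ) = ∏ i, ((e i : ℝ) + 1) := by
    rw [tau_card Fq k g e hg hginj f hf D hD]
    push_cast
    rfl
  set F := Finset.univ.filter (fun i => ((g i).natDegree : ℝ) ≤ 1 / l) with hF
  -- rewrite LHS as product
  have hexp : Real.exp (l * (f.natDegree : ℝ))
      = ∏ i, Real.exp (l * (e i : ℝ) * ((g i).natDegree : ℝ)) := by
    rw [← Real.exp_sum]
    congr 1
    rw [hdegf, Finset.mul_sum]
    exact Finset.sum_congr rfl fun i _ => by ring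
  have hlhs : (D.card : ℝ) / Real.exp (l * (f.natDegree : ℝ))
      = ∏ i, ((e i : ℝ) + 1) / Real.exp (l * (e i : ℝ) * ((g i).natDegree : ℝ)) := by
    rw [hcardD, hexp, Finset.prod_div_distrib]
  have hterm_nonneg : ∀ i : Fin k,
      0 ≤ ((e i : ℝ) + 1) / Real.exp (l * (e i : ℝ) * ((g i).natDegree : ℝ)) := by
    intro i; positivity
  have hpart1 : (D.card : ℝ) / Real.exp (l * (f.natDegree : ℝ)) ≤
      ∏ i ∈ F, ((e i : ℝ) + 1) / (1 + l * (e i : ℝ) * ((g i).natDegree : ℝ)) := by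
    rw [hlhs, ← Finset.prod_filter_mul_prod_filter_not Finset.univ
      (fun i => ((g i).natDegree : ℝ) ≤ 1 / l)]
    have h2 : ∏ i ∈ Finset.univ.filter (fun i => ¬ ((g i).natDegree : ℝ) ≤ 1 / l),
        ((e i : ℝ) + 1) / Real.exp (l * (e i : ℝ) * ((g i).natDegree : ℝ)) ≤ 1 := by
      refine Finset.prod_le_one (fun i _ => hterm_nonneg i) ?_
      intro i hi
      rw [Finset.mem_filter] at hi
      have hd : 1 / l < ((g i).natDegree : ℝ) := lt_of_not_ge hi.2
      have hld : 1 < l * ((g i).natDegree : ℝ) := by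
        rw [div_lt_iff₀ hl] at hd; linarith
      have he1 : (1 : ℝ) ≤ (e i : ℝ) := by exact_mod_cast he i
      rw [div_le_one (Real.exp_pos _)]
      calc (e i : ℝ) + 1 ≤ 1 + l * (e i : ℝ) * ((g i).natDegree : ℝ) := by nlinarith
        _ ≤ Real.exp (l * (e i : ℝ) * ((g i).natDegree : ℝ)) := by
            have := Real.add_one_le_exp (l * (e i : ℝ) * ((g i).natDegree : ℝ))
            linarith
    have h1 : ∏ i ∈ F, ((e i : ℝ) + 1) / Real.exp (l * (e i : ℝ) * ((g i).natDegree : ℝ))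
        ≤ ∏ i ∈ F, ((e i : ℝ) + 1) / (1 + l * (e i : ℝ) * ((g i).natDegree : ℝ)) := by
      refine Finset.prod_le_prod (fun i _ => hterm_nonneg i) ?_
      intro i _
      have hpos : (0 : ℝ) < 1 + l * (e i : ℝ) * ((g i).natDegree : ℝ) := by positivity
      have := Real.add_one_le_exp (l * (e i : ℝ) * ((g i).natDegree : ℝ))
      exact div_le_div_of_nonneg_left (by positivity) hpos (by linarith)
    have hFnonneg : 0 ≤ ∏ i ∈ F, ((e i : ℝ) + 1) /
        Real.exp (l * (e i : ℝ) * ((g i).natDegree : ℝ)) :=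
      Finset.prod_nonneg fun i _ => hterm_nonneg i
    calc (∏ i ∈ F, ((e i : ℝ) + 1) / Real.exp (l * (e i : ℝ) * ((g i).natDegree : ℝ))) *
          (∏ i ∈ Finset.univ.filter (fun i => ¬ ((g i).natDegree : ℝ) ≤ 1 / l),
            ((e i : ℝ) + 1) / Real.exp (l * (e i : ℝ) * ((g i).natDegree : ℝ)))
        ≤ (∏ i ∈ F, ((e i : ℝ) + 1) /
            Real.exp (l * (e i : ℝ) * ((g i).natDegree : ℝ))) * 1 := by
          exact mul_le_mul_of_nonneg_left h2 hFnonneg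
      _ = _ := by rw [mul_one]
      _ ≤ _ := h1
  refine ⟨hpart1, fun hl1 => ?_⟩
  -- counting: F.card ≤ q^(1/l)
  set q := Fintype.card Fq with hq
  have hq2 : 2 ≤ q := Fintype.one_lt_card
  set m := Nat.floor (1 / l) with hm
  have hcount : (F.card : ℝ) ≤ (q : ℝ) ^ ((1 : ℝ) / l) := by
    have hmem : ∀ x ∈ F, (g x).natDegree ∈ Finset.Icc 1 m := by
      intro x hx
      rw [hF, Finset.mem_filter] at hx
      exact Finset.mem_Icc.2 ⟨hdeg1 x, Nat.le_floor hx.2⟩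
    have hsum := Finset.card_eq_sum_card_fiberwise hmem
    have hstep : (F.card : ℝ) ≤ ∑ d ∈ Finset.Icc 1 m, (q : ℝ) ^ d / d := by
      rw [hsum]
      push_cast
      refine Finset.sum_le_sum fun d hd => ?_
      have hd1 : 1 ≤ d := (Finset.mem_Icc.1 hd).1
      have hdR : (0 : ℝ) < d := by exact_mod_cast hd1
      rw [le_div_iff₀ hdR]
      have hsub : (F.filter fun i => (g i).natDegree = d).card
          ≤ (Finset.univ.filter fun i => (g i).natDegree = d).card := by
        refine Finset.card_le_card ?_
        intro x hx
        rw [Finset.mem_filter] at hx ⊢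
        exact ⟨Finset.mem_univ x, hx.2⟩
      have hSd := Sd_bound Fq k g hg hginj d
      have : (F.filter fun i => (g i).natDegree = d).card * d ≤ q ^ d :=
        le_trans (Nat.mul_le_mul_right d hsub) hSd
      exact_mod_cast this
    have hgeom := geom_bound q hq2 m
    have hrpow : ((q : ℝ) ^ m : ℝ) ≤ (q : ℝ) ^ ((1 : ℝ) / l) := by
      rw [← Real.rpow_natCast (q : ℝ) m]
      refine Real.rpow_le_rpow_of_exponent_le (by exact_mod_cast hq2.trans' (by norm_num)) ?_
      exact Nat.floor_le (by positivity)
    linarith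
  -- each factor ≤ 1/l
  have hfac : ∀ i ∈ F, ((e i : ℝ) + 1) / (1 + l * (e i : ℝ) * ((g i).natDegree : ℝ)) ≤ 1 / l := by
    intro i _
    have he1 : (1 : ℝ) ≤ (e i : ℝ) := by exact_mod_cast he i
    have hd1 : (1 : ℝ) ≤ ((g i).natDegree : ℝ) := by exact_mod_cast hdeg1 i
    have hpos : (0 : ℝ) < 1 + l * (e i : ℝ) * ((g i).natDegree : ℝ) := by positivity
    rw [div_le_div_iff₀ hpos hl]
    nlinarith [mul_nonneg (mul_nonneg hl.le (by linarith : (0:ℝ) ≤ (e i : ℝ)))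
      (by linarith : (0:ℝ) ≤ ((g i).natDegree : ℝ) - 1)]
  have hone_lt : (1 : ℝ) < 1 / l := by
    rw [lt_div_iff₀ hl]; linarith
  have hlog : 0 < Real.log (1 / l) := Real.log_pos hone_lt
  have hprod_le : ∏ i ∈ F, ((e i : ℝ) + 1) / (1 + l * (e i : ℝ) * ((g i).natDegree : ℝ))
      ≤ (1 / l) ^ F.card := by
    rw [← Finset.prod_const]
    refine Finset.prod_le_prod (fun i _ => by positivity) hfac
  have hpow_exp : ((1 : ℝ) / l) ^ F.card = Real.exp (F.card * Real.log (1 / l)) := by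
    calc ((1 : ℝ) / l) ^ F.card
        = Real.exp (Real.log (1 / l)) ^ F.card := by
          rw [Real.exp_log (by positivity : (0:ℝ) < 1 / l)]
      _ = Real.exp (F.card * Real.log (1 / l)) := by
          rw [← Real.exp_nat_mul]
  have hfinal : ∏ i ∈ F, ((e i : ℝ) + 1) / (1 + l * (e i : ℝ) * ((g i).natDegree : ℝ))
      ≤ Real.exp ((q : ℝ) ^ ((1 : ℝ) / l) * Real.log (1 / l)) := by
    calc _ ≤ (1 / l) ^ F.card := hprod_le
      _ = Real.exp (F.card * Real.log (1 / l)) := hpow_exp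
      _ ≤ _ := by
          apply Real.exp_le_exp.2
          exact mul_le_mul_of_nonneg_right hcount hlog.le
  have := le_trans hpart1 hfinal
  rw [div_le_iff₀ (Real.exp_pos _)] at this
  linarith [this]
end

section
/- The number π_q(n) of monic irreducible polynomials of degree n over F_q satisfies q^n/n − 2·q^{n/2}/n ≤ π_q(n) ≤ q^n/n for all n ≥ 1. -/
open Polynomial UniqueFactorizationMonoid

section AuxIrrCount

variable {Fq : Type} [Field Fq] [Fintype Fq]

lemma aux_nat_dvd {q d : ℕ} (hq : 2 ≤ q) (hd : 0 < d) :
    ∀ n, q ^ d - 1 ∣ q ^ n - 1 → d ∣ n := by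
  intro n
  induction n using Nat.strong_induction_on with
  | _ n ih =>
    intro h
    rcases lt_or_ge n d with hlt | hle
    · have h1 : q ^ n < q ^ d := Nat.pow_lt_pow_right (by omega) hlt
      have h2 : 1 ≤ q ^ n := Nat.one_le_pow _ _ (by omega)
      rcases Nat.eq_zero_of_dvd_of_lt h (by omega) with h0
      have hn1 : q ^ n = 1 := by omega
      have : n = 0 := by
        by_contra hne
        have : q ^ 1 ≤ q ^ n := Nat.pow_le_pow_right (by omega) (by omega)
        simp at this; omega
      simp [this]
    · have hn0 : 0 < n := lt_of_lt_of_le hd hle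
      have h1 : q ^ (n - d) * q ^ d = q ^ n := by rw [← pow_add]; congr 1; omega
      have h2 : 1 ≤ q ^ (n - d) := Nat.one_le_pow _ _ (by omega)
      have h3 : 1 ≤ q ^ d := Nat.one_le_pow _ _ (by omega)
      have h4 : q ^ (n - d) * (q ^ d - 1) = q ^ n - q ^ (n - d) := by
        rw [Nat.mul_sub, mul_one, h1]
      have key : q ^ d - 1 ∣ q ^ (n - d) - 1 := by
        have h5 : q ^ (n - d) - 1 = (q ^ n - 1) - q ^ (n - d) * (q ^ d - 1) := by
          rw [h4]
          have : q ^ (n - d) ≤ q ^ n := Nat.pow_le_pow_right (by omega) (by omega)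
          omega
        rw [h5]
        exact Nat.dvd_sub h (dvd_mul_left _ _)
      have hrec := ih (n - d) (by omega) key
      have : n = (n - d) + d := by omega
      rw [this]
      exact Nat.dvd_add hrec dvd_rfl

lemma aux_geom (q : ℕ) (hq : 2 ≤ q) : ∀ m, ∑ d ∈ Finset.Icc 1 m, q ^ d ≤ 2 * q ^ m := by
  intro m
  induction m with
  | zero => simp
  | succ m ih =>
    have hins : Finset.Icc 1 (m + 1) = insert (m + 1) (Finset.Icc 1 m) := by
      ext x; simp [Finset.mem_Icc, Finset.mem_insert]; omega
    rw [hins, Finset.sum_insert (by simp)]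
    have h1 : q ^ (m + 1) = q * q ^ m := by ring
    have h2 : 2 * q ^ m ≤ q * q ^ m := Nat.mul_le_mul_right _ hq
    omega

lemma aux_pow_card {f : Fq[X]} (hm : f.Monic) (hi : Irreducible f)
    (x : AdjoinRoot f) : x ^ (Fintype.card Fq) ^ f.natDegree = x := by
  haveI := Fact.mk hi
  have hf : f ≠ 0 := hi.ne_zero
  let pb := AdjoinRoot.powerBasis hf
  haveI : Fintype (AdjoinRoot f) := Module.fintypeOfFintype pb.basis
  have hcard : Fintype.card (AdjoinRoot f) = Fintype.card Fq ^ f.natDegree := by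
    rw [Module.card_fintype pb.basis]
    congr 1
    simp [pb, AdjoinRoot.powerBasis]
  rw [← hcard]
  exact FiniteField.pow_card x

lemma aux_pow_card_iter {f : Fq[X]} (hm : f.Monic) (hi : Irreducible f)
    (k : ℕ) (x : AdjoinRoot f) :
    x ^ ((Fintype.card Fq) ^ f.natDegree) ^ k = x := by
  induction k with
  | zero => simp
  | succ k ih => rw [pow_succ, pow_mul, ih, aux_pow_card hm hi]

lemma aux_dvd_X_pow {f : Fq[X]} (hm : f.Monic) (hi : Irreducible f) {r : ℕ}
    (hdvd : f.natDegree ∣ r) : f ∣ X ^ (Fintype.card Fq) ^ r - X := by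
  haveI := Fact.mk hi
  have hf : f ≠ 0 := hi.ne_zero
  have hmin : minpoly Fq (AdjoinRoot.root f) = f := by
    rw [AdjoinRoot.minpoly_root hf, hm.leadingCoeff, inv_one, map_one, mul_one]
  rw [← hmin]
  apply minpoly.dvd
  obtain ⟨k, rfl⟩ := hdvd
  simp only [map_sub, map_pow, aeval_X]
  rw [pow_mul, aux_pow_card_iter hm hi, sub_self]

lemma aux_deg_dvd {g : Fq[X]} (hm : g.Monic) (hi : Irreducible g) {n : ℕ}
    (hdvd : g ∣ X ^ (Fintype.card Fq) ^ n - X) : g.natDegree ∣ n := by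
  haveI := Fact.mk hi
  have hg : g ≠ 0 := hi.ne_zero
  set q := Fintype.card Fq with hqdef
  set K := AdjoinRoot g with hK
  let p := ringChar Fq
  haveI : CharP Fq p := ringChar.charP Fq
  obtain ⟨s, hp, hqs⟩ := FiniteField.card Fq p
  haveI : Fact p.Prime := ⟨hp⟩
  haveI : CharP K p := charP_of_injective_algebraMap (algebraMap Fq K).injective p
  -- the root satisfies x ^ q ^ n = x
  have hroot : (AdjoinRoot.root g) ^ q ^ n = AdjoinRoot.root g := by
    obtain ⟨h, hh⟩ := hdvd
    have h0 : (aeval (AdjoinRoot.root g)) (X ^ q ^ n - X : Fq[X]) = 0 := by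
      rw [hh, map_mul]
      have : (aeval (AdjoinRoot.root g)) g = 0 := by
        have hmin : minpoly Fq (AdjoinRoot.root g) = g := by
          rw [AdjoinRoot.minpoly_root hg, hm.leadingCoeff, inv_one, map_one, mul_one]
        have h5 := minpoly.aeval Fq (AdjoinRoot.root g)
        rwa [hmin] at h5
      rw [this, zero_mul]
    simpa [sub_eq_zero] using h0
  -- frobenius iterate as an AlgHom
  let ψ : K →ₐ[Fq] K :=
    { toRingHom := iterateFrobenius K p (s * n)
      commutes' := by
        intro c
        show iterateFrobenius K p (↑s * n) (algebraMap Fq K c) = algebraMap Fq K c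
        rw [iterateFrobenius_def, ← map_pow]
        congr 1
        rw [pow_mul, ← hqs]
        exact FiniteField.pow_card_pow n c }
  have hψ : ∀ x : K, ψ x = x ^ q ^ n := by
    intro x
    show iterateFrobenius K p (s * n) x = _
    rw [iterateFrobenius_def, pow_mul, ← hqs]
  have hall : ∀ x : K, x ^ q ^ n = x := by
    have htop : (⊤ : Subalgebra Fq K) ≤ AlgHom.equalizer ψ (AlgHom.id Fq K) := by
      rw [← AdjoinRoot.adjoinRoot_eq_top (f := g)]
      rw [Algebra.adjoin_le_iff]
      intro x hx
      simp only [Set.mem_singleton_iff] at hx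
      subst hx
      show ψ _ = _
      rw [hψ, hroot]
      rfl
    intro x
    have := htop (Algebra.mem_top (x := x))
    have : ψ x = x := this
    rwa [hψ] at this
  -- cardinality and cyclic group argument
  let pb := AdjoinRoot.powerBasis hg
  haveI : Fintype K := Module.fintypeOfFintype pb.basis
  have hcard : Fintype.card K = q ^ g.natDegree := by
    rw [Module.card_fintype pb.basis]
    congr 1
    simp [pb, AdjoinRoot.powerBasis]
  obtain ⟨ζ, hζ⟩ := IsCyclic.exists_generator (α := Kˣ)
  have horder : orderOf ζ = q ^ g.natDegree - 1 := by
    classical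
    rw [orderOf_eq_card_of_forall_mem_zpowers hζ, Nat.card_eq_fintype_card, Fintype.card_units, hcard]
  have hq2 : 2 ≤ q := Fintype.one_lt_card
  have hqn1 : 1 ≤ q ^ n := Nat.one_le_pow _ _ (by omega)
  have hζ1 : ζ ^ (q ^ n - 1) = 1 := by
    have h1 : (ζ : K) ^ q ^ n = ζ := hall ζ
    have hne : (ζ : K) ≠ 0 := Units.ne_zero ζ
    have h2 : (ζ : K) ^ (q ^ n - 1) * ζ = ζ := by
      rw [← pow_succ, Nat.sub_add_cancel hqn1, h1]
    have h3 : (ζ : K) ^ (q ^ n - 1) = 1 := by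
      have h2 := mul_right_cancel₀ hne (h2.trans (one_mul _).symm)
      exact h2
    ext
    rw [Units.val_pow_eq_pow_val, h3, Units.val_one]
  have hdvd2 : q ^ g.natDegree - 1 ∣ q ^ n - 1 := by
    rw [← horder]
    exact orderOf_dvd_of_pow_eq_one hζ1
  exact aux_nat_dvd hq2 hi.natDegree_pos n hdvd2

section DecEq
variable [DecidableEq Fq]

lemma aux_F_monic (r : ℕ) (hr : 0 < r) :
    (X ^ (Fintype.card Fq) ^ r - X : Fq[X]).Monic := by
  apply monic_X_pow_sub
  rw [degree_X]
  exact_mod_cast Nat.one_lt_pow (by omega) Fintype.one_lt_card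

lemma aux_F_squarefree (r : ℕ) (hr : 0 < r) :
    Squarefree (X ^ (Fintype.card Fq) ^ r - X : Fq[X]) := by
  let p := ringChar Fq
  haveI : CharP Fq p := ringChar.charP Fq
  obtain ⟨s, hp, hqs⟩ := FiniteField.card Fq p
  apply Polynomial.Separable.squarefree
  apply galois_poly_separable p
  rw [hqs, ← pow_mul]
  exact dvd_pow_self p (by positivity)

lemma aux_sum_deg (r : ℕ) (hr : 0 < r) :
    ∑ g ∈ (normalizedFactors (X ^ (Fintype.card Fq) ^ r - X : Fq[X])).toFinset,
      g.natDegree = (Fintype.card Fq) ^ r := by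
  classical
  set q := Fintype.card Fq
  set F : Fq[X] := X ^ q ^ r - X with hF
  have hq2 : (2:ℕ) ≤ q := Fintype.one_lt_card
  have hmonic : F.Monic := aux_F_monic r hr
  have hne : F ≠ 0 := hmonic.ne_zero
  have hnodup : (normalizedFactors F).Nodup :=
    (squarefree_iff_nodup_normalizedFactors hne).mp (aux_F_squarefree r hr)
  have hdeg : F.natDegree = q ^ r :=
    FiniteField.X_pow_card_pow_sub_X_natDegree_eq Fq (by omega) Fintype.one_lt_card
  have hfacmonic : ∀ g ∈ normalizedFactors F, Monic g := by
    intro g hg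
    have h1 : normalize g = g := normalize_normalized_factor g hg
    have h2 : g ≠ 0 := (irreducible_of_normalized_factor g hg).ne_zero
    rw [← h1]
    exact monic_normalize h2
  have hprod : (normalizedFactors F).prod = F := by
    apply eq_of_monic_of_associated _ hmonic (prod_normalizedFactors hne)
    have h3 := monic_multiset_prod_of_monic (normalizedFactors F) id (by simpa using hfacmonic)
    rwa [Multiset.map_id] at h3
  have hsum : ((normalizedFactors F).map natDegree).sum = F.natDegree := by
    conv_rhs => rw [← hprod]
    rw [natDegree_multiset_prod_of_monic _ hfacmonic]
  rw [← hdeg, ← hsum, Finset.sum_eq_multiset_sum]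
  congr 1
  rw [Multiset.toFinset_val, Multiset.dedup_eq_self.mpr hnodup]

end DecEq

end AuxIrrCount

section Aux2
variable {Fq : Type} [Field Fq] [Fintype Fq] [DecidableEq Fq]

-- membership of a monic irreducible divisor in the normalized factors
lemma aux_mem_factors {f F : Fq[X]} (hm : f.Monic) (hi : Irreducible f)
    (hF : F ≠ 0) (hdvd : f ∣ F) : f ∈ normalizedFactors F := by
  have h1 : normalizedFactors f = {f} := by
    rw [normalizedFactors_irreducible hi, hm.normalize_eq_self]
  have h2 : normalizedFactors f ≤ normalizedFactors F :=
    (dvd_iff_normalizedFactors_le_normalizedFactors hi.ne_zero hF).mp hdvd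
  rw [h1] at h2
  exact Multiset.mem_of_le h2 (Multiset.mem_singleton_self f)

lemma aux_key (n : ℕ) (hn : 1 ≤ n) (P : Finset (Polynomial Fq))
    (hP : ∀ w, w ∈ P ↔ w.Monic ∧ Irreducible w ∧ w.natDegree = n) :
    ∃ R : ℕ, (Fintype.card Fq) ^ n = n * P.card + R ∧
      R ≤ 2 * (Fintype.card Fq) ^ (n / 2) := by
  set q := Fintype.card Fq with hq
  have hq2 : (2:ℕ) ≤ q := Fintype.one_lt_card
  set F : Fq[X] := X ^ q ^ n - X with hF
  have hFmonic : F.Monic := aux_F_monic n hn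
  have hFne : F ≠ 0 := hFmonic.ne_zero
  set S : Finset Fq[X] := (normalizedFactors F).toFinset with hS
  have hmemS : ∀ g, g ∈ S ↔ g ∈ normalizedFactors F := by
    intro g; simp only [hS, Multiset.mem_toFinset]
  have hfac : ∀ g ∈ S, g.Monic ∧ Irreducible g ∧ g.natDegree ∣ n := by
    intro g hg
    rw [hmemS] at hg
    have hirr := irreducible_of_normalized_factor g hg
    have hmon : g.Monic := by
      have h1 : normalize g = g := normalize_normalized_factor g hg
      rw [← h1]; exact monic_normalize hirr.ne_zero
    exact ⟨hmon, hirr, aux_deg_dvd hmon hirr (dvd_of_mem_normalizedFactors hg)⟩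
  -- P is the set of factors of degree n
  have hPS : P = S.filter (fun g => g.natDegree = n) := by
    ext w
    rw [hP, Finset.mem_filter, hmemS]
    constructor
    · rintro ⟨h1, h2, h3⟩
      refine ⟨aux_mem_factors h1 h2 hFne ?_, h3⟩
      exact aux_dvd_X_pow h1 h2 (by rw [h3])
    · rintro ⟨hw, h3⟩
      obtain ⟨hm, hi, _⟩ := hfac w ((hmemS w).mpr hw)
      exact ⟨hm, hi, h3⟩
  -- split the sum
  have hsplit : ∑ g ∈ S, g.natDegree =
      ∑ g ∈ S.filter (fun g => g.natDegree = n), g.natDegree +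
      ∑ g ∈ S.filter (fun g => ¬ g.natDegree = n), g.natDegree :=
    (Finset.sum_filter_add_sum_filter_not S _ _).symm
  have hsum1 : ∑ g ∈ S.filter (fun g => g.natDegree = n), g.natDegree = n * P.card := by
    rw [hPS]
    rw [Finset.sum_congr rfl (fun g hg => (Finset.mem_filter.mp hg).2)]
    rw [Finset.sum_const, smul_eq_mul, mul_comm]
  set T : Finset Fq[X] := S.filter (fun g => ¬ g.natDegree = n) with hT
  refine ⟨∑ g ∈ T, g.natDegree, ?_, ?_⟩
  · rw [← aux_sum_deg n hn, ← hS, hsplit, hsum1, hT]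
  · -- bound the remainder
    set m := n / 2 with hm
    have hmaps : ∀ g ∈ T, g.natDegree ∈ Finset.Icc 1 m := by
      intro g hg
      rw [hT, Finset.mem_filter] at hg
      obtain ⟨hgS, hne⟩ := hg
      obtain ⟨hmon, hirr, hdvd⟩ := hfac g hgS
      have h1 : 0 < g.natDegree := hirr.natDegree_pos
      obtain ⟨k, hk⟩ := hdvd
      have hk0 : k ≠ 0 := by rintro rfl; rw [mul_zero] at hk; omega
      have hk1 : k ≠ 1 := by rintro rfl; rw [mul_one] at hk; exact hne hk.symm
      have hk2 : 2 ≤ k := by omega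
      rw [Finset.mem_Icc]
      constructor
      · omega
      · rw [hm, Nat.le_div_iff_mul_le (by omega)]
        calc g.natDegree * 2 ≤ g.natDegree * k := Nat.mul_le_mul_left _ hk2
        _ = n := hk.symm
    have hfiber : ∑ g ∈ T, g.natDegree =
        ∑ d ∈ Finset.Icc 1 m, ∑ g ∈ T.filter (fun g => g.natDegree = d), g.natDegree :=
      (Finset.sum_fiberwise_of_maps_to hmaps _).symm
    rw [hfiber]
    calc ∑ d ∈ Finset.Icc 1 m, ∑ g ∈ T.filter (fun g => g.natDegree = d), g.natDegree
        ≤ ∑ d ∈ Finset.Icc 1 m, q ^ d := by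
          apply Finset.sum_le_sum
          intro d hd
          rw [Finset.mem_Icc] at hd
          have hd1 : 0 < d := hd.1
          have hsub : T.filter (fun g => g.natDegree = d) ⊆
              (normalizedFactors (X ^ q ^ d - X : Fq[X])).toFinset := by
            intro g hg
            rw [Finset.mem_filter, hT, Finset.mem_filter] at hg
            obtain ⟨⟨hgS, _⟩, hgd⟩ := hg
            obtain ⟨hmon, hirr, _⟩ := hfac g hgS
            rw [Multiset.mem_toFinset]
            apply aux_mem_factors hmon hirr (aux_F_monic d hd1).ne_zero
            exact aux_dvd_X_pow hmon hirr (by rw [hgd])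
          calc ∑ g ∈ T.filter (fun g => g.natDegree = d), g.natDegree
              ≤ ∑ g ∈ (normalizedFactors (X ^ q ^ d - X : Fq[X])).toFinset, g.natDegree :=
                Finset.sum_le_sum_of_subset hsub
            _ = q ^ d := aux_sum_deg d hd1
      _ ≤ 2 * q ^ m := aux_geom q hq2 m

end Aux2

/-- The number `π_q(n)` of monic irreducible polynomials of degree `n` over `F_q`
satisfies `q^n/n − 2·q^{n/2}/n ≤ π_q(n) ≤ q^n/n` for all `n ≥ 1`. -/
theorem irreducible_polynomial_count
    (Fq : Type) [Field Fq] [Fintype Fq] (n : ℕ) (hn : 1 ≤ n)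
    (P : Finset (Polynomial Fq))
    (hP : ∀ w, w ∈ P ↔ w.Monic ∧ Irreducible w ∧ w.natDegree = n) :
    (Fintype.card Fq : ℝ) ^ n / n -
        2 * (Fintype.card Fq : ℝ) ^ ((n : ℝ) / 2) / n ≤ (P.card : ℝ) ∧
      (P.card : ℝ) ≤ (Fintype.card Fq : ℝ) ^ n / n := by
  classical
  obtain ⟨R, hkey, hR⟩ := aux_key n hn P hP
  set q := Fintype.card Fq with hq
  have hq2 : (2:ℕ) ≤ q := Fintype.one_lt_card
  have hn0 : (0:ℝ) < n := by exact_mod_cast hn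
  set m := n / 2 with hm
  have hBm : ((q:ℝ)) ^ m ≤ (q:ℝ) ^ ((n : ℝ) / 2) := by
    rw [← Real.rpow_natCast (q:ℝ) m]
    apply Real.rpow_le_rpow_of_exponent_le (by exact_mod_cast Nat.one_le_of_lt hq2)
    calc ((m:ℕ) : ℝ) ≤ (n : ℝ) / ((2:ℕ) : ℝ) := Nat.cast_div_le
      _ = (n : ℝ) / 2 := by norm_num
  have hcast : ((q:ℝ)) ^ n = (n : ℝ) * (P.card : ℝ) + (R : ℝ) := by
    have h2 : ((q ^ n : ℕ) : ℝ) = ((n * P.card + R : ℕ) : ℝ) := by rw [hkey]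
    push_cast at h2
    exact h2
  have hRcast : (R : ℝ) ≤ 2 * (q:ℝ) ^ ((n : ℝ) / 2) := by
    calc (R : ℝ) ≤ ((2 * q ^ m : ℕ) : ℝ) := by exact_mod_cast hR
      _ = 2 * ((q:ℝ)) ^ m := by push_cast; ring
      _ ≤ 2 * (q:ℝ) ^ ((n : ℝ) / 2) := by linarith
  constructor
  · rw [← sub_div, div_le_iff₀ hn0]
    linarith
  · rw [le_div_iff₀ hn0]
    nlinarith [Nat.cast_nonneg (α := ℝ) R]
end

section
/- For any monic polynomials b and g over F_q and any ℓ ≥ 0: ∑_{χ mod R_{ℓ,g}} |∑*_{a mod R_{ℓ,g}, a ≡ b mod R_ℓ} χ(a)·e(a/g)|² = q^ℓ · Φ(g)², where the inner sum is over invertible residues a modulo R_{ℓ,g} whose first ℓ coefficients agree with those of b. -/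
open Polynomial

/-- The coefficient of `t^{-1}` in the Laurent expansion at infinity of `u/g`
(for `g` monic): it equals the coefficient of `t^{deg g − 1}` in `u mod g`. -/
noncomputable def resCoeff {Fq : Type} [Field Fq] (u g : Polynomial Fq) : Fq :=
  (u % g).coeff (g.natDegree - 1)

/-- The standard additive character `e(ξ) = exp(2πi·tr(x_{-1})/p)` evaluated on a
`t^{-1}`-coefficient `x ∈ F_q`. -/
noncomputable def eChar {Fq : Type} [Field Fq] [Fintype Fq] (p : ℕ)
    [Algebra (ZMod p) Fq] (x : Fq) : ℂ :=
  Complex.exp (2 * Real.pi * Complex.I *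
    ((Algebra.trace (ZMod p) Fq x).val : ℂ) / p)

/-- A (multiplicative) character modulo the relation `R_{ℓ,g}`, as a function on
polynomials. -/
def IsCharModR {Fq : Type} [Field Fq] (ℓ : ℕ) (g : Polynomial Fq)
    (χ : Polynomial Fq → ℂ) : Prop :=
  (∀ f : Polynomial Fq, ¬ f.Monic → χ f = 0) ∧
  (∀ f : Polynomial Fq, f.Monic → ¬ IsCoprime f g → χ f = 0) ∧
  (∀ f : Polynomial Fq, f.Monic → IsCoprime f g → χ f ≠ 0) ∧
  (∀ f h : Polynomial Fq, f.Monic → h.Monic → χ (f * h) = χ f * χ h) ∧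
  (∀ f h : Polynomial Fq, f.Monic → h.Monic → g ∣ (f - h) →
    (X : Polynomial Fq) ^ (ℓ + 1) ∣ (f.reverse - h.reverse) → χ f = χ h)

section Aux
variable {Fq : Type} [Field Fq]

lemma coprime_of_dvd_sub' {g f h : Polynomial Fq} (hdvd : g ∣ f - h) (hc : IsCoprime h g) :
    IsCoprime f g := by
  obtain ⟨c, hc'⟩ := hdvd
  have : f = h + g * c := by linear_combination hc'
  rw [this]; exact hc.add_mul_left_left c

lemma isCoprime_X_pow_of_coeff_zero {p : Polynomial Fq} (h : p.coeff 0 ≠ 0) (m : ℕ) :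
    IsCoprime p ((X : Polynomial Fq) ^ m) := by
  refine IsCoprime.pow_right ?_
  refine ⟨C (p.coeff 0)⁻¹, - (C (p.coeff 0)⁻¹ * p.divX), ?_⟩
  have hp := Polynomial.divX_mul_X_add p
  have h2 : C (p.coeff 0)⁻¹ * C (p.coeff 0) = 1 := by
    rw [← C_mul, inv_mul_cancel₀ h, C_1]
  linear_combination h2 - C (p.coeff 0)⁻¹ * hp

lemma isUnit_mk_of_coprime {g f : Polynomial Fq} (h : IsCoprime f g) :
    IsUnit (Ideal.Quotient.mk (Ideal.span {g}) f) := by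
  obtain ⟨u, v, huv⟩ := h
  apply IsUnit.of_mul_eq_one (Ideal.Quotient.mk _ u)
  have hg : Ideal.Quotient.mk (Ideal.span {g}) g = 0 := by
    rw [Ideal.Quotient.eq_zero_iff_mem]
    exact Ideal.mem_span_singleton_self g
  have := congrArg (Ideal.Quotient.mk (Ideal.span {g})) huv
  rw [map_add, map_mul, map_mul, map_one, hg, mul_zero, add_zero] at this
  rw [mul_comm]; exact this

lemma mk_eq_mk_iff_dvd {g f h : Polynomial Fq} :
    Ideal.Quotient.mk (Ideal.span {g}) f = Ideal.Quotient.mk (Ideal.span {g}) h ↔ g ∣ f - h := by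
  rw [Ideal.Quotient.eq, Ideal.mem_span_singleton]

/-- The key lifting construction. -/
lemma lift_lemma (ℓ : ℕ) {g : Polynomial Fq} (hg : g.Monic) {x u : Polynomial Fq}
    (hx : IsCoprime x g) (hu : u.coeff 0 = 1) :
    ∃ f : Polynomial Fq, f.Monic ∧ IsCoprime f g ∧ g ∣ (f - x) ∧
      ∀ i ≤ ℓ, f.reverse.coeff i = u.coeff i := by
  set d := g.natDegree with hd
  set n := d + ℓ with hn
  set W : Polynomial Fq := ∑ i ∈ Finset.range (ℓ+1), C (u.coeff i) * X ^ (n - i) with hW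
  set r : Polynomial Fq := (x - W) %ₘ g with hr
  have hdeg_g : g.degree = (d : WithBot ℕ) := degree_eq_natDegree hg.ne_zero
  -- coefficients of W
  have hWc : ∀ i ≤ ℓ, W.coeff (n - i) = u.coeff i := by
    intro i hi
    rw [hW, finset_sum_coeff]
    rw [Finset.sum_eq_single i]
    · rw [coeff_C_mul, coeff_X_pow, if_pos rfl, mul_one]
    · intro j hj hji
      rw [coeff_C_mul, coeff_X_pow, if_neg, mul_zero]
      simp only [Finset.mem_range] at hj
      omega
    · intro hi'
      simp only [Finset.mem_range, not_lt] at hi'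
      omega
  -- r has small coefficients
  have hrc : ∀ k, d ≤ k → r.coeff k = 0 := by
    intro k hk
    apply coeff_eq_zero_of_degree_lt
    calc r.degree < g.degree := degree_modByMonic_lt _ hg
    _ ≤ (k : WithBot ℕ) := by rw [hdeg_g]; exact_mod_cast hk
  have hfW : ∀ i ≤ ℓ, (W + r).coeff (n - i) = u.coeff i := by
    intro i hi
    rw [coeff_add, hWc i hi, hrc (n - i) (by omega), add_zero]
  -- degree bound
  have hWdeg : W.natDegree ≤ n := by
    apply Polynomial.natDegree_sum_le_of_forall_le
    intro i hi
    exact (natDegree_C_mul_X_pow_le _ _).trans (by omega)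
  have hrdeg : r.natDegree ≤ n := by
    rw [natDegree_le_iff_degree_le]
    calc r.degree ≤ g.degree := le_of_lt (degree_modByMonic_lt _ hg)
    _ ≤ (n : WithBot ℕ) := by rw [hdeg_g]; exact_mod_cast (by omega : d ≤ n)
  have hfdeg : (W + r).natDegree ≤ n := natDegree_add_le_of_degree_le hWdeg hrdeg
  have hfn : (W + r).coeff n = 1 := by
    have := hfW 0 (Nat.zero_le ℓ)
    rw [Nat.sub_zero] at this
    rw [this, hu]
  have hmonic : (W + r).Monic := monic_of_natDegree_le_of_coeff_eq_one n hfdeg hfn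
  have hfnd : (W + r).natDegree = n :=
    le_antisymm hfdeg (le_natDegree_of_ne_zero (by rw [hfn]; exact one_ne_zero))
  have hdvd : g ∣ (W + r) - x := by
    refine ⟨-((x - W) /ₘ g), ?_⟩
    have := Polynomial.modByMonic_eq_sub_mul_div (x - W) g
    rw [← hr] at this
    linear_combination this
  refine ⟨W + r, hmonic, coprime_of_dvd_sub' hdvd hx, hdvd, ?_⟩
  intro i hi
  rw [coeff_reverse, hfnd, revAt_le (by omega : i ≤ n)]
  exact hfW i hi

end Aux

section Grp
variable (Fq : Type) [Field Fq] (ℓ : ℕ) (g : Polynomial Fq)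

abbrev Rquot : Type := Polynomial Fq ⧸ Ideal.span {g}
abbrev Squot : Type := Polynomial Fq ⧸ Ideal.span {(X : Polynomial Fq) ^ (ℓ+1)}

noncomputable def epsHom : Squot Fq ℓ →+* Fq :=
  Ideal.Quotient.lift _ (Polynomial.evalRingHom (0:Fq)) (by
    intro a ha
    rw [Ideal.mem_span_singleton] at ha
    obtain ⟨c, rfl⟩ := ha
    simp [eval_pow])

@[simp] lemma epsHom_mk (u : Polynomial Fq) :
    epsHom Fq ℓ (Ideal.Quotient.mk _ u) = u.eval 0 := rfl

noncomputable def epsU : (Squot Fq ℓ)ˣ →* Fqˣ := Units.map (epsHom Fq ℓ).toMonoidHom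

noncomputable def Kgrp : Subgroup (Squot Fq ℓ)ˣ := (epsU Fq ℓ).ker

noncomputable abbrev Ggrp := (Rquot Fq g)ˣ × (Kgrp Fq ℓ)

variable {Fq ℓ g}

lemma rev_coeff_zero {f : Polynomial Fq} (hm : f.Monic) : f.reverse.coeff 0 = 1 := by
  rw [coeff_zero_reverse]; exact hm

noncomputable def theta (f : Polynomial Fq) (hm : f.Monic) (hc : IsCoprime f g) :
    Ggrp Fq ℓ g :=
  ⟨(isUnit_mk_of_coprime hc).unit,
   ⟨(isUnit_mk_of_coprime (isCoprime_X_pow_of_coeff_zero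
       (by rw [rev_coeff_zero hm]; exact one_ne_zero) (ℓ+1))).unit, by
     rw [Kgrp, MonoidHom.mem_ker]
     ext
     show epsHom Fq ℓ _ = 1
     rw [IsUnit.unit_spec, epsHom_mk, ← coeff_zero_eq_eval_zero, rev_coeff_zero hm]⟩⟩

@[simp] lemma theta_fst (f : Polynomial Fq) (hm : f.Monic) (hc : IsCoprime f g) :
    (((theta (ℓ := ℓ) f hm hc).1 : (Rquot Fq g)ˣ) : Rquot Fq g) = Ideal.Quotient.mk _ f :=
  IsUnit.unit_spec _

@[simp] lemma theta_snd (f : Polynomial Fq) (hm : f.Monic) (hc : IsCoprime f g) :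
    ((((theta (ℓ := ℓ) f hm hc).2 : Kgrp Fq ℓ) : (Squot Fq ℓ)ˣ) : Squot Fq ℓ) =
      Ideal.Quotient.mk _ f.reverse :=
  IsUnit.unit_spec _

lemma theta_mul (f h : Polynomial Fq) (hmf : f.Monic) (hcf : IsCoprime f g)
    (hmh : h.Monic) (hch : IsCoprime h g) :
    theta (ℓ := ℓ) (f * h) (hmf.mul hmh) (hcf.mul_left hch) =
      theta f hmf hcf * theta h hmh hch := by
  refine Prod.ext (Units.ext ?_) (Subtype.ext (Units.ext ?_))
  · show _ = (_ * _ : Rquot Fq g)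
    rw [theta_fst, theta_fst, theta_fst, map_mul]
  · show _ = (_ * _ : Squot Fq ℓ)
    rw [theta_snd, theta_snd, theta_snd, Polynomial.reverse_mul_of_domain, map_mul]

lemma theta_eq_iff (f h : Polynomial Fq) (hmf : f.Monic) (hcf : IsCoprime f g)
    (hmh : h.Monic) (hch : IsCoprime h g) :
    theta (ℓ := ℓ) f hmf hcf = theta h hmh hch ↔
      (g ∣ f - h ∧ (X : Polynomial Fq) ^ (ℓ+1) ∣ (f.reverse - h.reverse)) := by
  constructor
  · intro he
    have h1 := congrArg (fun γ : Ggrp Fq ℓ g => ((γ.1 : (Rquot Fq g)ˣ) : Rquot Fq g)) he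
    have h2 := congrArg (fun γ : Ggrp Fq ℓ g => (((γ.2 : Kgrp Fq ℓ) : (Squot Fq ℓ)ˣ) : Squot Fq ℓ)) he
    simp only [theta_fst, theta_snd] at h1 h2
    exact ⟨mk_eq_mk_iff_dvd.mp h1, mk_eq_mk_iff_dvd.mp h2⟩
  · rintro ⟨h1, h2⟩
    refine Prod.ext (Units.ext ?_) (Subtype.ext (Units.ext ?_))
    · show (_ : Rquot Fq g) = _
      rw [theta_fst, theta_fst]; exact mk_eq_mk_iff_dvd.mpr h1
    · show (_ : Squot Fq ℓ) = _
      rw [theta_snd, theta_snd]; exact mk_eq_mk_iff_dvd.mpr h2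

lemma theta_surjective (hg : g.Monic) (γ : Ggrp Fq ℓ g) :
    ∃ (f : Polynomial Fq) (hm : f.Monic) (hc : IsCoprime f g),
      theta (ℓ := ℓ) f hm hc = γ := by
  obtain ⟨α, κ⟩ := γ
  obtain ⟨x₀, hx₀⟩ := Ideal.Quotient.mk_surjective (I := Ideal.span {g}) (α : Rquot Fq g)
  obtain ⟨y₀, hy₀⟩ := Ideal.Quotient.mk_surjective (I := Ideal.span {g}) ((α⁻¹ : (Rquot Fq g)ˣ) : Rquot Fq g)
  have hxy : g ∣ x₀ * y₀ - 1 := by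
    rw [← mk_eq_mk_iff_dvd]
    rw [map_mul, hx₀, hy₀, map_one]
    exact_mod_cast α.mul_inv
  have hx : IsCoprime x₀ g := by
    obtain ⟨c, hc⟩ := hxy
    exact ⟨y₀, -c, by linear_combination hc⟩
  obtain ⟨u₀, hu₀⟩ := Ideal.Quotient.mk_surjective (I := Ideal.span {(X : Polynomial Fq) ^ (ℓ+1)})
    (((κ : (Squot Fq ℓ)ˣ) : (Squot Fq ℓ)))
  have hu : u₀.coeff 0 = 1 := by
    have hk : epsU Fq ℓ (κ : (Squot Fq ℓ)ˣ) = 1 := κ.2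
    have : epsHom Fq ℓ ((κ : (Squot Fq ℓ)ˣ) : Squot Fq ℓ) = 1 := by
      have := congrArg (fun w : Fqˣ => (w : Fq)) hk
      exact this
    rw [← hu₀, epsHom_mk, ← coeff_zero_eq_eval_zero] at this
    exact this
  obtain ⟨f, hm, hc, hdvd, hrev⟩ := lift_lemma ℓ hg hx hu
  refine ⟨f, hm, hc, ?_⟩
  refine Prod.ext (Units.ext ?_) (Subtype.ext (Units.ext ?_))
  · show (_ : Rquot Fq g) = _
    rw [theta_fst, ← hx₀]
    exact mk_eq_mk_iff_dvd.mpr hdvd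
  · show (_ : Squot Fq ℓ) = _
    rw [theta_snd, ← hu₀]
    refine mk_eq_mk_iff_dvd.mpr (Polynomial.X_pow_dvd_iff.mpr fun i hi => ?_)
    rw [coeff_sub, hrev i (by omega), sub_self]

end Grp

section Count
variable {Fq : Type} [Field Fq] [Fintype Fq] {ℓ : ℕ} {g : Polynomial Fq}

lemma equiv_U_units (hg : g.Monic) (U : Finset (Polynomial Fq))
    (hU : ∀ x, x ∈ U ↔ x.degree < g.degree ∧ IsCoprime x g) :
    ∃ e : {x // x ∈ U} ≃ (Rquot Fq g)ˣ, True := by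
  have toF : ∀ x : {x // x ∈ U}, IsUnit (Ideal.Quotient.mk (Ideal.span {g}) (x : Polynomial Fq)) :=
    fun x => isUnit_mk_of_coprime ((hU x).mp x.2).2
  refine ⟨Equiv.ofBijective (fun x => (toF x).unit) ⟨?_, ?_⟩, trivial⟩
  · intro x y hxy
    have h1 : Ideal.Quotient.mk (Ideal.span {g}) (x : Polynomial Fq) =
        Ideal.Quotient.mk (Ideal.span {g}) (y : Polynomial Fq) := by
      have := congrArg (fun u : (Rquot Fq g)ˣ => (u : Rquot Fq g)) hxy
      simpa using this
    have hdvd := mk_eq_mk_iff_dvd.mp h1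
    have hdeg : ((x : Polynomial Fq) - y).degree < g.degree :=
      lt_of_le_of_lt (degree_sub_le _ _) (max_lt ((hU x).mp x.2).1 ((hU y).mp y.2).1)
    have := Polynomial.eq_zero_of_dvd_of_degree_lt hdvd hdeg
    exact Subtype.ext (sub_eq_zero.mp this)
  · intro α
    obtain ⟨x₀, hx₀⟩ := Ideal.Quotient.mk_surjective (I := Ideal.span {g}) (α : Rquot Fq g)
    obtain ⟨y₀, hy₀⟩ := Ideal.Quotient.mk_surjective (I := Ideal.span {g}) ((α⁻¹ : (Rquot Fq g)ˣ) : Rquot Fq g)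
    have hxy : g ∣ x₀ * y₀ - 1 := by
      rw [← mk_eq_mk_iff_dvd, map_mul, hx₀, hy₀, map_one]
      exact_mod_cast α.mul_inv
    have hx : IsCoprime x₀ g := by
      obtain ⟨c, hc⟩ := hxy
      exact ⟨y₀, -c, by linear_combination hc⟩
    have hdvd : g ∣ x₀ %ₘ g - x₀ := by
      have := Polynomial.modByMonic_eq_sub_mul_div x₀ g
      exact ⟨-(x₀ /ₘ g), by linear_combination this⟩
    have hmem : x₀ %ₘ g ∈ U := by
      rw [hU]
      exact ⟨degree_modByMonic_lt _ hg, coprime_of_dvd_sub' hdvd hx⟩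
    refine ⟨⟨x₀ %ₘ g, hmem⟩, Units.ext ?_⟩
    show Ideal.Quotient.mk _ _ = (α : Rquot Fq g)
    rw [← hx₀]
    exact mk_eq_mk_iff_dvd.mpr hdvd

lemma equiv_K (ℓ : ℕ) :
    ∃ e : (Fin ℓ → Fq) ≃ (Kgrp Fq ℓ), True := by
  classical
  set w : (Fin ℓ → Fq) → Polynomial Fq :=
    fun c => C 1 + ∑ i : Fin ℓ, C (c i) * X ^ ((i : ℕ) + 1) with hw
  have hw0 : ∀ c, (w c).coeff 0 = 1 := by
    intro c
    show (C 1 + ∑ i : Fin ℓ, C (c i) * X ^ ((i : ℕ) + 1)).coeff 0 = 1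
    rw [coeff_add, coeff_C_zero, finset_sum_coeff,
      Finset.sum_eq_zero (fun i _ => by
        rw [coeff_C_mul, coeff_X_pow, if_neg (by omega), mul_zero]), add_zero]
  have hwc : ∀ c (i : Fin ℓ), (w c).coeff ((i : ℕ) + 1) = c i := by
    intro c i
    show (C 1 + ∑ j : Fin ℓ, C (c j) * X ^ ((j : ℕ) + 1)).coeff ((i : ℕ) + 1) = c i
    rw [coeff_add, coeff_C, if_neg (by omega), finset_sum_coeff, zero_add,
      Finset.sum_eq_single i (fun j _ hji => by
        rw [coeff_C_mul, coeff_X_pow, if_neg (fun h => hji (Fin.ext (by omega))), mul_zero])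
      (fun h => absurd (Finset.mem_univ i) h),
      coeff_C_mul, coeff_X_pow, if_pos rfl, mul_one]
  have toU : ∀ c, IsUnit (Ideal.Quotient.mk (Ideal.span {(X : Polynomial Fq) ^ (ℓ+1)}) (w c)) :=
    fun c => isUnit_mk_of_coprime (isCoprime_X_pow_of_coeff_zero (by rw [hw0]; exact one_ne_zero) _)
  have toK : ∀ c, (toU c).unit ∈ Kgrp Fq ℓ := by
    intro c
    have : epsU Fq ℓ (toU c).unit = 1 := by
      ext
      show epsHom Fq ℓ _ = 1
      rw [IsUnit.unit_spec, epsHom_mk, ← coeff_zero_eq_eval_zero, hw0]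
    exact this
  refine ⟨Equiv.ofBijective (fun c => ⟨(toU c).unit, toK c⟩) ⟨?_, ?_⟩, trivial⟩
  · intro c c' hcc
    have h1 : Ideal.Quotient.mk (Ideal.span {(X : Polynomial Fq) ^ (ℓ+1)}) (w c) =
        Ideal.Quotient.mk _ (w c') := by
      have := congrArg (fun u : Kgrp Fq ℓ => ((u : (Squot Fq ℓ)ˣ) : Squot Fq ℓ)) hcc
      simpa using this
    have hdvd := mk_eq_mk_iff_dvd.mp h1
    rw [Polynomial.X_pow_dvd_iff] at hdvd
    funext i
    have := hdvd ((i : ℕ) + 1) (by omega)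
    rw [coeff_sub, hwc, hwc] at this
    exact sub_eq_zero.mp this
  · intro κ
    obtain ⟨p, hp⟩ := Ideal.Quotient.mk_surjective (I := Ideal.span {(X : Polynomial Fq) ^ (ℓ+1)})
      (((κ : (Squot Fq ℓ)ˣ) : Squot Fq ℓ))
    have hp0 : p.coeff 0 = 1 := by
      have hk : epsU Fq ℓ (κ : (Squot Fq ℓ)ˣ) = 1 := κ.2
      have h2 : epsHom Fq ℓ ((κ : (Squot Fq ℓ)ˣ) : Squot Fq ℓ) = 1 :=
        congrArg (fun u : Fqˣ => (u : Fq)) hk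
      rw [← hp, epsHom_mk, ← coeff_zero_eq_eval_zero] at h2
      exact h2
    refine ⟨fun i => p.coeff ((i : ℕ) + 1), Subtype.ext (Units.ext ?_)⟩
    show Ideal.Quotient.mk _ _ = ((κ : (Squot Fq ℓ)ˣ) : Squot Fq ℓ)
    rw [← hp]
    refine mk_eq_mk_iff_dvd.mpr (Polynomial.X_pow_dvd_iff.mpr fun d hd => ?_)
    rw [coeff_sub]
    rcases d with _ | j
    · rw [hw0, hp0, sub_self]
    · have : (⟨j, by omega⟩ : Fin ℓ) = (⟨j, by omega⟩ : Fin ℓ) := rfl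
      have h2 := hwc (fun i => p.coeff ((i : ℕ) + 1)) ⟨j, by omega⟩
      simp only at h2
      rw [h2, sub_self]

end Count

section CharTh
variable {G : Type} [CommGroup G] [Finite G]

lemma hasEnoughG : HasEnoughRootsOfUnity ℂ (Monoid.exponent G) := by
  haveI : NeZero ((Monoid.exponent G : ℕ) : ℂ) :=
    ⟨Nat.cast_ne_zero.mpr Monoid.exponent_ne_zero_of_finite⟩
  infer_instance

lemma finite_homsG : Finite (G →* ℂˣ) := by
  haveI := hasEnoughG (G := G)
  exact Finite.of_equiv G
    (CommGroup.monoidHom_mulEquiv_of_hasEnoughRootsOfUnity G ℂ).some.toEquiv.symm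

lemma card_homsG : Nat.card (G →* ℂˣ) = Nat.card G := by
  haveI := hasEnoughG (G := G)
  exact Nat.card_congr (CommGroup.monoidHom_mulEquiv_of_hasEnoughRootsOfUnity G ℂ).some.toEquiv

lemma conj_homG (φ : G →* ℂˣ) (x : G) :
    (starRingEnd ℂ) ((φ x : ℂˣ) : ℂ) = ((φ x⁻¹ : ℂˣ) : ℂ) := by
  haveI : Fintype G := Fintype.ofFinite G
  have hpow : (((φ x : ℂˣ) : ℂ)) ^ Fintype.card G = 1 := by
    rw [← Units.val_pow_eq_pow_val, ← map_pow, pow_card_eq_one, map_one, Units.val_one]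
  have habs : ‖((φ x : ℂˣ) : ℂ)‖ = 1 :=
    Complex.norm_eq_one_of_pow_eq_one hpow Fintype.card_ne_zero
  rw [← Complex.inv_eq_conj habs, map_inv, ← Units.val_inv_eq_inv_val]

lemma sum_homsG_eq_zero [Fintype (G →* ℂˣ)] {γ : G} (hγ : γ ≠ 1) :
    ∑ φ : G →* ℂˣ, ((φ γ : ℂˣ) : ℂ) = 0 := by
  haveI := hasEnoughG (G := G)
  obtain ⟨ψ, hψ⟩ := CommGroup.exists_apply_ne_one_of_hasEnoughRootsOfUnity G ℂ hγ
  have key : ∑ φ : G →* ℂˣ, (((ψ * φ) γ : ℂˣ) : ℂ) = ∑ φ : G →* ℂˣ, ((φ γ : ℂˣ) : ℂ) :=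
    Fintype.sum_bijective _ (Group.mulLeft_bijective ψ) _ _ (fun φ => rfl)
  have key2 : ((ψ γ : ℂˣ) : ℂ) * ∑ φ : G →* ℂˣ, ((φ γ : ℂˣ) : ℂ)
      = ∑ φ : G →* ℂˣ, ((φ γ : ℂˣ) : ℂ) := by
    rw [Finset.mul_sum, ← key]
    exact Finset.sum_congr rfl (fun φ _ => by
      rw [MonoidHom.mul_apply, Units.val_mul])
  have h3 : (((ψ γ : ℂˣ) : ℂ) - 1) * ∑ φ : G →* ℂˣ, ((φ γ : ℂˣ) : ℂ) = 0 := by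
    linear_combination key2
  rcases mul_eq_zero.mp h3 with h | h
  · exact absurd (Units.ext (sub_eq_zero.mp h)) hψ
  · exact h

lemma sum_homsG_one [Fintype (G →* ℂˣ)] :
    ∑ φ : G →* ℂˣ, ((φ (1 : G) : ℂˣ) : ℂ) = (Nat.card G : ℂ) := by
  rw [← card_homsG (G := G), Nat.card_eq_fintype_card]
  simp

end CharTh

section Char
variable {Fq : Type} [Field Fq] {ℓ : ℕ} {g : Polynomial Fq}

open Classical in
noncomputable def phiOf (ℓ : ℕ) (g : Polynomial Fq) (ψ : Ggrp Fq ℓ g →* ℂˣ) :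
    Polynomial Fq → ℂ :=
  fun f => if h : f.Monic ∧ IsCoprime f g then ((ψ (theta f h.1 h.2) : ℂˣ) : ℂ) else 0

lemma phiOf_spec (ψ : Ggrp Fq ℓ g →* ℂˣ) (f : Polynomial Fq) (hm : f.Monic)
    (hc : IsCoprime f g) : phiOf ℓ g ψ f = ((ψ (theta f hm hc) : ℂˣ) : ℂ) := by
  rw [phiOf, dif_pos ⟨hm, hc⟩]

lemma isCharModR_phiOf (ψ : Ggrp Fq ℓ g →* ℂˣ) : IsCharModR ℓ g (phiOf ℓ g ψ) := by
  refine ⟨?_, ?_, ?_, ?_, ?_⟩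
  · intro f hf; rw [phiOf, dif_neg (fun h => hf h.1)]
  · intro f _ hf; rw [phiOf, dif_neg (fun h => hf h.2)]
  · intro f hm hc; rw [phiOf_spec ψ f hm hc]; exact Units.ne_zero _
  · intro f h hmf hmh
    by_cases hcf : IsCoprime f g
    · by_cases hch : IsCoprime h g
      · rw [phiOf_spec ψ f hmf hcf, phiOf_spec ψ h hmh hch,
          phiOf_spec ψ (f*h) (hmf.mul hmh) (hcf.mul_left hch),
          theta_mul f h hmf hcf hmh hch, map_mul, Units.val_mul]
      · have hL : phiOf ℓ g ψ (f * h) = 0 := by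
          rw [phiOf, dif_neg]; rintro ⟨-, hc⟩; exact hch hc.of_mul_left_right
        have hR : phiOf ℓ g ψ h = 0 := by
          rw [phiOf, dif_neg]; rintro ⟨-, hc⟩; exact hch hc
        rw [hL, hR, mul_zero]
    · have hL : phiOf ℓ g ψ (f * h) = 0 := by
        rw [phiOf, dif_neg]; rintro ⟨-, hc⟩; exact hcf hc.of_mul_left_left
      have hR : phiOf ℓ g ψ f = 0 := by
        rw [phiOf, dif_neg]; rintro ⟨-, hc⟩; exact hcf hc
      rw [hL, hR, zero_mul]
  · intro f h hmf hmh hdvd hrev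
    by_cases hcf : IsCoprime f g
    · have hch : IsCoprime h g := coprime_of_dvd_sub' (dvd_sub_comm.mp hdvd) hcf
      rw [phiOf_spec ψ f hmf hcf, phiOf_spec ψ h hmh hch,
        (theta_eq_iff f h hmf hcf hmh hch).mpr ⟨hdvd, hrev⟩]
    · have hch : ¬ IsCoprime h g := fun hch => hcf (coprime_of_dvd_sub' hdvd hch)
      have hL : phiOf ℓ g ψ f = 0 := by
        rw [phiOf, dif_neg]; rintro ⟨-, hc⟩; exact hcf hc
      have hR : phiOf ℓ g ψ h = 0 := by
        rw [phiOf, dif_neg]; rintro ⟨-, hc⟩; exact hch hc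
      rw [hL, hR]

lemma phiOf_injective (hg : g.Monic) : Function.Injective (phiOf (Fq := Fq) ℓ g) := by
  intro ψ ψ' hpp
  ext γ
  obtain ⟨f, hm, hc, rfl⟩ := theta_surjective hg γ
  have := congrFun hpp f
  rw [phiOf_spec ψ f hm hc, phiOf_spec ψ' f hm hc] at this
  exact_mod_cast this

lemma phiOf_surjOn (hg : g.Monic) (χ : Polynomial Fq → ℂ) (hχ : IsCharModR ℓ g χ) :
    ∃ ψ : Ggrp Fq ℓ g →* ℂˣ, phiOf ℓ g ψ = χ := by
  classical
  obtain ⟨h1, h2, h3, h4, h5⟩ := hχ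
  -- choose a section of theta
  have hsec : ∀ γ : Ggrp Fq ℓ g, ∃ f : Polynomial Fq,
      ∃ hm : f.Monic, ∃ hc : IsCoprime f g, theta f hm hc = γ := theta_surjective hg
  choose s hsm hsc hs using hsec
  -- χ factors through theta
  have key : ∀ (f : Polynomial Fq) (hm : f.Monic) (hc : IsCoprime f g),
      χ f = χ (s (theta f hm hc)) := by
    intro f hm hc
    obtain ⟨hd1, hd2⟩ := (theta_eq_iff f (s (theta f hm hc)) hm hc
      (hsm _) (hsc _)).mp (hs (theta f hm hc)).symm
    exact h5 f _ hm (hsm _) hd1 hd2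
  have hvne : ∀ γ, χ (s γ) ≠ 0 := fun γ => h3 _ (hsm γ) (hsc γ)
  have hvmul : ∀ γ δ, χ (s (γ * δ)) = χ (s γ) * χ (s δ) := by
    intro γ δ
    have e1 : χ (s γ * s δ) = χ (s γ) * χ (s δ) := h4 _ _ (hsm γ) (hsm δ)
    have e2 : χ (s γ * s δ) = χ (s (γ * δ)) := by
      have := key (s γ * s δ) ((hsm γ).mul (hsm δ)) ((hsc γ).mul_left (hsc δ))
      rw [this]
      congr 1
      rw [theta_mul _ _ (hsm γ) (hsc γ) (hsm δ) (hsc δ), hs, hs]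
    rw [← e2, e1]
  refine ⟨MonoidHom.mk' (fun γ => Units.mk0 (χ (s γ)) (hvne γ))
    (fun γ δ => Units.ext (by simp [hvmul γ δ])), ?_⟩
  funext f
  by_cases hf : f.Monic ∧ IsCoprime f g
  · rw [phiOf, dif_pos hf]
    show χ (s (theta f hf.1 hf.2)) = χ f
    exact (key f hf.1 hf.2).symm
  · rw [phiOf, dif_neg hf]
    by_cases hmf : f.Monic
    · exact (h2 f hmf (fun hc => hf ⟨hmf, hc⟩)).symm
    · exact (h1 f hmf).symm

end Char

/-- Gauss sum identity:
`∑_{χ mod R_{ℓ,g}} |∑*_{a mod R_{ℓ,g}, a ≡ b mod R_ℓ} χ(a)·e(a/g)|² = q^ℓ·Φ(g)²`,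
where `A` is a set of representatives of the invertible residues modulo
`R_{ℓ,g}` whose first `ℓ` coefficients agree with those of `b`. -/
theorem gauss_sum_second_moment
    (Fq : Type) [Field Fq] [Fintype Fq] (p : ℕ) [Fact p.Prime] [CharP Fq p]
    [Algebra (ZMod p) Fq]
    (ℓ : ℕ) (g : Polynomial Fq) (hg : g.Monic)
    (b : Polynomial Fq) (hb : b.Monic)
    (A : Finset (Polynomial Fq))
    (hA1 : ∀ a ∈ A, a.Monic ∧ IsCoprime a g ∧
      (X : Polynomial Fq) ^ (ℓ + 1) ∣ (a.reverse - b.reverse))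
    (hA2 : ∀ f : Polynomial Fq, f.Monic → IsCoprime f g →
      (X : Polynomial Fq) ^ (ℓ + 1) ∣ (f.reverse - b.reverse) →
      ∃! a, a ∈ A ∧ g ∣ (f - a) ∧
        (X : Polynomial Fq) ^ (ℓ + 1) ∣ (f.reverse - a.reverse))
    (CH : Finset (Polynomial Fq → ℂ))
    (hCH : ∀ χ, χ ∈ CH ↔ IsCharModR ℓ g χ)
    (U : Finset (Polynomial Fq))
    (hU : ∀ x, x ∈ U ↔ x.degree < g.degree ∧ IsCoprime x g) :
    ∑ χ ∈ CH, (‖∑ a ∈ A, χ a * eChar p (resCoeff a g)‖) ^ 2 =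
      (Fintype.card Fq : ℝ) ^ ℓ * (U.card : ℝ) ^ 2 := by
  classical
  haveI instFR : Finite (Rquot Fq g)ˣ := by
    obtain ⟨e, -⟩ := equiv_U_units hg U hU
    exact Finite.of_equiv _ e
  haveI instFK : Finite (Kgrp Fq ℓ) := by
    obtain ⟨e, -⟩ := equiv_K (Fq := Fq) ℓ
    exact Finite.of_equiv _ e
  haveI instFG : Finite (Ggrp Fq ℓ g) := inferInstance
  haveI instFH : Finite (Ggrp Fq ℓ g →* ℂˣ) := by exact finite_homsG (G := Ggrp Fq ℓ g)
  haveI instFT : Fintype (Ggrp Fq ℓ g →* ℂˣ) := Fintype.ofFinite _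
  have conjG : ∀ (ψ : Ggrp Fq ℓ g →* ℂˣ) (x : Ggrp Fq ℓ g),
      (starRingEnd ℂ) ((ψ x : ℂˣ) : ℂ) = ((ψ x⁻¹ : ℂˣ) : ℂ) := by
    intro ψ x; exact conj_homG ψ x
  have sumz : ∀ γ : Ggrp Fq ℓ g, γ ≠ 1 →
      ∑ ψ : Ggrp Fq ℓ g →* ℂˣ, ((ψ γ : ℂˣ) : ℂ) = 0 := by
    intro γ hγ; exact @sum_homsG_eq_zero (Ggrp Fq ℓ g) _ _ instFT γ hγ
  have sumo : ∑ ψ : Ggrp Fq ℓ g →* ℂˣ, ((ψ (1 : Ggrp Fq ℓ g) : ℂˣ) : ℂ)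
      = ((Nat.card (Ggrp Fq ℓ g) : ℕ) : ℂ) := by
    exact @sum_homsG_one (Ggrp Fq ℓ g) _ _ instFT
  -- cardinality of the group
  have hcardG : Nat.card (Ggrp Fq ℓ g) = U.card * Fintype.card Fq ^ ℓ := by
    rw [Nat.card_prod]
    congr 1
    · obtain ⟨e, -⟩ := equiv_U_units hg U hU
      rw [← Nat.card_congr e, Nat.card_eq_fintype_card, Fintype.card_coe]
    · obtain ⟨e, -⟩ := equiv_K (Fq := Fq) ℓ
      rw [← Nat.card_congr e, Nat.card_eq_fintype_card, Fintype.card_fun, Fintype.card_fin]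
  -- injectivity of theta on A
  have A_inj : ∀ a ∈ A, ∀ a' ∈ A, g ∣ a - a' →
      (X : Polynomial Fq) ^ (ℓ + 1) ∣ (a.reverse - a'.reverse) → a = a' := by
    intro a ha a' ha' h1 h2
    obtain ⟨hma, hca, hra⟩ := hA1 a ha
    obtain ⟨y, -, hyu⟩ := hA2 a hma hca hra
    have e1 : a = y := hyu a ⟨ha, by simp, by simp⟩
    have e2 : a' = y := hyu a' ⟨ha', h1, h2⟩
    rw [e1, e2]
  have dvd_mod_sub : ∀ a : Polynomial Fq, g ∣ a %ₘ g - a := fun a =>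
    ⟨-(a /ₘ g), by linear_combination Polynomial.modByMonic_eq_sub_mul_div a g⟩
  -- |A| = |U|
  have hAcard : A.card = U.card := by
    refine Finset.card_bij (fun a _ => a %ₘ g) ?_ ?_ ?_
    · intro a ha
      exact (hU _).mpr ⟨degree_modByMonic_lt a hg,
        coprime_of_dvd_sub' (dvd_mod_sub a) (hA1 a ha).2.1⟩
    · intro a ha a' ha' heq
      have heq' : a %ₘ g = a' %ₘ g := heq
      refine A_inj a ha a' ha' ?_ ?_
      · have d1 := dvd_mod_sub a
        have d2 := dvd_mod_sub a'
        have : a - a' = (a' %ₘ g - a') - (a %ₘ g - a) := by rw [heq']; ring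
        rw [this]
        exact dvd_sub d2 d1
      · have hra := (hA1 a ha).2.2
        have hra' := (hA1 a' ha').2.2
        have : a.reverse - a'.reverse = (a.reverse - b.reverse) - (a'.reverse - b.reverse) := by
          ring
        rw [this]
        exact dvd_sub hra hra'
    · intro x hx
      obtain ⟨hxdeg, hxcop⟩ := (hU x).mp hx
      have hu : (b.reverse).coeff 0 = 1 := rev_coeff_zero hb
      obtain ⟨f, hmf, hcf, hdvdf, hrevf⟩ := lift_lemma ℓ hg hxcop hu
      have hrevb : (X : Polynomial Fq) ^ (ℓ + 1) ∣ (f.reverse - b.reverse) :=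
        Polynomial.X_pow_dvd_iff.mpr fun i hi => by
          rw [coeff_sub, hrevf i (by omega), sub_self]
      obtain ⟨a, ⟨haA, hadvd, -⟩, -⟩ := hA2 f hmf hcf hrevb
      refine ⟨a, haA, ?_⟩
      have hax : g ∣ a - x := by
        have := dvd_sub hdvdf hadvd
        have h2 : (f - x) - (f - a) = a - x := by ring
        rwa [h2] at this
      have hmx : g ∣ a %ₘ g - x := by
        have := dvd_add (dvd_mod_sub a) hax
        rwa [sub_add_sub_cancel] at this
      have hdeg : (a %ₘ g - x).degree < g.degree :=
        lt_of_le_of_lt (degree_sub_le _ _) (max_lt (degree_modByMonic_lt a hg) hxdeg)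
      exact sub_eq_zero.mp (Polynomial.eq_zero_of_dvd_of_degree_lt hmx hdeg)
  -- CH is the image of phiOf
  have hCHimg : CH = Finset.image (phiOf ℓ g) Finset.univ := by
    ext χ
    rw [hCH, Finset.mem_image]
    constructor
    · intro hχ
      obtain ⟨ψ, hψ⟩ := phiOf_surjOn hg χ hχ
      exact ⟨ψ, Finset.mem_univ ψ, hψ⟩
    · rintro ⟨ψ, -, rfl⟩
      exact isCharModR_phiOf ψ
  -- absolute value of the additive character
  have habs_e : ∀ x : Fq, ‖eChar p x‖ = 1 := by
    intro x
    rw [eChar]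
    have hre : 2 * Real.pi * Complex.I * (((Algebra.trace (ZMod p) Fq x).val : ℕ) : ℂ) / p
        = ((2 * Real.pi * (((Algebra.trace (ZMod p) Fq x).val : ℕ) : ℝ) / p : ℝ) : ℂ)
          * Complex.I := by
      push_cast
      ring
    rw [hre, Complex.norm_exp_ofReal_mul_I]
  -- the inner orthogonality computation
  set E : Polynomial Fq → ℂ := fun a => eChar p (resCoeff a g) with hE
  have inner_eq : ∀ a ∈ A, ∀ a' ∈ A,
      (∑ ψ : Ggrp Fq ℓ g →* ℂˣ,
        (phiOf ℓ g ψ a * E a) * (starRingEnd ℂ) (phiOf ℓ g ψ a' * E a'))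
        = if a = a' then ((Nat.card (Ggrp Fq ℓ g) : ℕ) : ℂ) else 0 := by
    intro a ha a' ha'
    obtain ⟨hma, hca, -⟩ := hA1 a ha
    obtain ⟨hma', hca', -⟩ := hA1 a' ha'
    have hterm : ∀ ψ : Ggrp Fq ℓ g →* ℂˣ,
        (phiOf ℓ g ψ a * E a) * (starRingEnd ℂ) (phiOf ℓ g ψ a' * E a')
        = (E a * (starRingEnd ℂ) (E a')) *
          ((ψ ((theta a hma hca) * (theta a' hma' hca')⁻¹) : ℂˣ) : ℂ) := by
      intro ψ
      rw [phiOf_spec ψ a hma hca, phiOf_spec ψ a' hma' hca', map_mul (starRingEnd ℂ),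
        conjG, map_mul ψ, Units.val_mul]
      ring
    rw [Finset.sum_congr rfl fun ψ _ => hterm ψ, ← Finset.mul_sum]
    by_cases haa : a = a'
    · subst haa
      rw [if_pos rfl]
      have h1 : theta (ℓ := ℓ) a hma hca * (theta a hma hca)⁻¹ = 1 := mul_inv_cancel _
      rw [h1, sumo, Complex.mul_conj, Complex.normSq_eq_norm_sq, habs_e, one_pow,
        Complex.ofReal_one, one_mul]
    · rw [if_neg haa]
      have hne : theta (ℓ := ℓ) a hma hca * (theta a' hma' hca')⁻¹ ≠ 1 := by
        rw [Ne, mul_inv_eq_one]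
        intro hEq
        obtain ⟨hd1, hd2⟩ := (theta_eq_iff a a' hma hca hma' hca').mp hEq
        exact haa (A_inj a ha a' ha' hd1 hd2)
      rw [sumz _ hne, mul_zero]
  -- main computation
  rw [hCHimg, Finset.sum_image (fun x _ y _ h => phiOf_injective hg h)]
  apply Complex.ofReal_injective
  push_cast
  calc (∑ ψ : Ggrp Fq ℓ g →* ℂˣ,
        ((‖∑ a ∈ A, phiOf ℓ g ψ a * E a‖ : ℝ) : ℂ) ^ 2)
      = ∑ ψ : Ggrp Fq ℓ g →* ℂˣ,
          (∑ a ∈ A, phiOf ℓ g ψ a * E a) *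
            (starRingEnd ℂ) (∑ a ∈ A, phiOf ℓ g ψ a * E a) :=
        Finset.sum_congr rfl fun ψ _ => by
          rw [← Complex.ofReal_pow, ← Complex.normSq_eq_norm_sq, Complex.mul_conj]
    _ = ∑ ψ : Ggrp Fq ℓ g →* ℂˣ, ∑ a ∈ A, ∑ a' ∈ A,
          (phiOf ℓ g ψ a * E a) * (starRingEnd ℂ) (phiOf ℓ g ψ a' * E a') :=
        Finset.sum_congr rfl fun ψ _ => by rw [map_sum, Finset.sum_mul_sum]
    _ = ∑ a ∈ A, ∑ a' ∈ A, ∑ ψ : Ggrp Fq ℓ g →* ℂˣ,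
          (phiOf ℓ g ψ a * E a) * (starRingEnd ℂ) (phiOf ℓ g ψ a' * E a') := by
        rw [Finset.sum_comm]
        exact Finset.sum_congr rfl fun a _ => Finset.sum_comm
    _ = ∑ a ∈ A, ∑ a' ∈ A, (if a = a' then ((Nat.card (Ggrp Fq ℓ g) : ℕ) : ℂ) else 0) :=
        Finset.sum_congr rfl fun a ha => Finset.sum_congr rfl fun a' ha' =>
          inner_eq a ha a' ha'
    _ = ∑ a ∈ A, ((Nat.card (Ggrp Fq ℓ g) : ℕ) : ℂ) :=
        Finset.sum_congr rfl fun a ha => by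
          rw [Finset.sum_ite_eq A a (fun _ => ((Nat.card (Ggrp Fq ℓ g) : ℕ) : ℂ)), if_pos ha]
    _ = (A.card : ℂ) * ((Nat.card (Ggrp Fq ℓ g) : ℕ) : ℂ) := by
        rw [Finset.sum_const, nsmul_eq_mul]
    _ = ((Fintype.card Fq : ℂ)) ^ ℓ * ((U.card : ℂ)) ^ 2 := by
        rw [hAcard, hcardG]
        push_cast
        ring
end

section
/- Let ξ = a/g + γ with a, g ∈ F_q[t], gcd(a,g) = 1, g monic, and |γ| ≤ 1/|g|². Then ∑_{f monic of degree k} |∑_{h monic of degree j} e(ξ·f·h)| ≪ q^{k+j}/|g| + q^k + |g|, with an absolute implied constant. -/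
open Polynomial

set_option linter.unusedSectionVars false

section echar
variable {Fq : Type} [Field Fq] [Fintype Fq] (p : ℕ) [Fact p.Prime] [CharP Fq p]
  [Algebra (ZMod p) Fq]

lemma hpC : (p : ℂ) ≠ 0 := by
  exact_mod_cast (Nat.Prime.ne_zero (Fact.out : p.Prime))

lemma exp_congr_mod (m m' : ℕ) (h : (m : ZMod p) = (m' : ZMod p)) :
    Complex.exp (2 * Real.pi * Complex.I * m / p) =
      Complex.exp (2 * Real.pi * Complex.I * m' / p) := by
  have hd : (p:ℤ) ∣ (m' : ℤ) - m := ((ZMod.natCast_eq_natCast_iff m m' p).mp h).dvd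
  obtain ⟨c, hc⟩ := hd
  have hZ : (m' : ℤ) = m + c * p := by linarith
  have hm : (m' : ℂ) = m + c * p := by exact_mod_cast hZ
  rw [Complex.exp_eq_exp_iff_exists_int]
  refine ⟨-c, ?_⟩
  rw [hm]
  push_cast
  field_simp [hpC p]
  ring

lemma abs_eChar (x : Fq) : ‖eChar p x‖ = 1 := by
  have : eChar p x = Complex.exp (((2 * Real.pi * ((Algebra.trace (ZMod p) Fq x).val / p) : ℝ) : ℂ) * Complex.I) := by
    unfold eChar; congr 1; push_cast; ring
  rw [this, Complex.norm_exp_ofReal_mul_I]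

lemma eChar_add (x y : Fq) : eChar p (x + y) = eChar p x * eChar p y := by
  unfold eChar
  rw [map_add, ← Complex.exp_add]
  have h1 : (((Algebra.trace (ZMod p) Fq x + Algebra.trace (ZMod p) Fq y).val : ℕ) : ZMod p)
      = ((((Algebra.trace (ZMod p) Fq x).val + (Algebra.trace (ZMod p) Fq y).val : ℕ)) : ZMod p) := by
    push_cast [ZMod.natCast_val, ZMod.cast_id]
    ring
  calc Complex.exp (2 * Real.pi * Complex.I * ((Algebra.trace (ZMod p) Fq x + Algebra.trace (ZMod p) Fq y).val : ℂ) / p)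
      = Complex.exp (2 * Real.pi * Complex.I * (((Algebra.trace (ZMod p) Fq x).val + (Algebra.trace (ZMod p) Fq y).val : ℕ) : ℂ) / p) :=
        exp_congr_mod p _ _ h1
    _ = _ := by push_cast; congr 1; ring

lemma eChar_zero : eChar p (0 : Fq) = 1 := by
  unfold eChar
  rw [map_zero]
  simp

lemma eChar_ne_one : ∃ y : Fq, eChar p y ≠ 1 := by
  obtain ⟨y, hy⟩ : ∃ y : Fq, Algebra.trace (ZMod p) Fq y ≠ 0 := by
    obtain ⟨y, hy⟩ := Algebra.trace_surjective (ZMod p) Fq 1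
    exact ⟨y, by rw [hy]; exact one_ne_zero⟩
  refine ⟨y, fun hcon => ?_⟩
  set v : ℕ := (Algebra.trace (ZMod p) Fq y).val with hv
  unfold eChar at hcon
  rw [Complex.exp_eq_one_iff] at hcon
  obtain ⟨n, hn⟩ := hcon
  have h2πI : (2 * (Real.pi:ℂ) * Complex.I) ≠ 0 := by
    simp [Real.pi_ne_zero, Complex.I_ne_zero]
  have hval : (v : ℂ) = n * p := by
    rw [mul_div_assoc] at hn
    have : (v:ℂ) / p = n := by
      have := mul_left_cancel₀ h2πI (hn.trans (by ring))
      exact this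
    field_simp [hpC p] at this
    linear_combination this
  have hvZ : (v : ℤ) = n * p := by exact_mod_cast hval
  have hdvd : p ∣ v := by
    have : (p:ℤ) ∣ (v:ℤ) := ⟨n, by linarith⟩
    exact_mod_cast this
  have hlt : v < p := ZMod.val_lt _
  have hne : v ≠ 0 := fun h0 => hy ((ZMod.val_eq_zero _).mp h0)
  have := Nat.le_of_dvd (Nat.pos_of_ne_zero hne) hdvd
  omega

end echar

section poly
variable {Fq : Type} [Field Fq]

lemma resCoeff_eq (a : Polynomial Fq) {g : Polynomial Fq} (hg : g.Monic) :
    resCoeff a g = (a %ₘ g).coeff (g.natDegree - 1) := by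
  rw [resCoeff, Polynomial.mod_def, hg.leadingCoeff]
  simp

/-- The φ-part of the `t^{-1}` coefficient. -/
def Lsum (φ : ℕ → Fq) (u : Polynomial Fq) : Fq := ∑ i ∈ u.support, u.coeff i * φ i

lemma Lsum_eq (φ : ℕ → Fq) (u : Polynomial Fq) : Lsum φ u = u.sum (fun i c => c * φ i) := by
  rw [Polynomial.sum_def, Lsum]

lemma Lsum_add (φ : ℕ → Fq) (u v : Polynomial Fq) :
    Lsum φ (u + v) = Lsum φ u + Lsum φ v := by
  simp only [Lsum_eq]
  exact Polynomial.sum_add_index u v _ (fun i => zero_mul _) (fun i a b => add_mul a b _)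

lemma Lsum_neg (φ : ℕ → Fq) (u : Polynomial Fq) : Lsum φ (-u) = -Lsum φ u := by
  rw [Lsum, Lsum, Polynomial.support_neg]
  rw [← Finset.sum_neg_distrib]
  exact Finset.sum_congr rfl fun i _ => by rw [Polynomial.coeff_neg, neg_mul]

lemma Lsum_sub (φ : ℕ → Fq) (u v : Polynomial Fq) :
    Lsum φ (u - v) = Lsum φ u - Lsum φ v := by
  rw [sub_eq_add_neg, Lsum_add, Lsum_neg, sub_eq_add_neg]

lemma Lsum_C_mul (φ : ℕ → Fq) (c : Fq) (u : Polynomial Fq) :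
    Lsum φ (C c * u) = c * Lsum φ u := by
  rw [Lsum_eq, Lsum_eq, ← Polynomial.smul_eq_C_mul, Polynomial.sum_smul_index u c (fun i c => c * φ i) (fun i => zero_mul (φ i))]
  rw [Polynomial.sum_def, Polynomial.sum_def, Finset.mul_sum]
  exact Finset.sum_congr rfl fun i _ => by ring

lemma Lsum_eq_zero {φ : ℕ → Fq} {d : ℕ} (hφ : ∀ i, i + 1 < 2 * d → φ i = 0)
    {u : Polynomial Fq} (hu : u.degree < ((2 * d - 1 : ℕ) : WithBot ℕ)) (hd : 1 ≤ d) :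
    Lsum φ u = 0 := by
  rw [Lsum]
  refine Finset.sum_eq_zero fun i hi => ?_
  rw [hφ i ?_, mul_zero]
  have h1 : (i : WithBot ℕ) ≤ u.degree := Polynomial.le_degree_of_ne_zero (Polynomial.mem_support_iff.mp hi)
  have h2 : i < 2 * d - 1 := by exact_mod_cast lt_of_le_of_lt h1 hu
  omega

lemma modmul {g : Polynomial Fq} (hg : g.Monic) (v w : Polynomial Fq) :
    ((v %ₘ g) * w) %ₘ g = (v * w) %ₘ g := by
  conv_rhs => rw [← Polynomial.modByMonic_add_div v g]
  rw [add_mul, Polynomial.add_modByMonic]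
  have : (g * (v /ₘ g) * w) %ₘ g = 0 :=
    (Polynomial.modByMonic_eq_zero_iff_dvd hg).mpr ⟨(v /ₘ g) * w, by ring⟩
  rw [this, add_zero]

lemma degree_mul_X_pow_lt {u : Polynomial Fq} {M i N : ℕ}
    (hu : u.degree < (M : WithBot ℕ)) (h : M + i ≤ N) :
    (u * X ^ i).degree < ((N : ℕ) : WithBot ℕ) := by
  rcases eq_or_ne u 0 with rfl | hu0
  · simp only [zero_mul, Polynomial.degree_zero]
    exact WithBot.bot_lt_coe N
  · have h1 : u.natDegree < M := (Polynomial.natDegree_lt_iff_degree_lt hu0).mpr hu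
    calc (u * X ^ i).degree ≤ u.degree + (X ^ i : Polynomial Fq).degree := Polynomial.degree_mul_le _ _
      _ = (u.natDegree : WithBot ℕ) + i := by rw [Polynomial.degree_eq_natDegree hu0, Polynomial.degree_X_pow]
      _ = ((u.natDegree + i : ℕ) : WithBot ℕ) := by exact_mod_cast rfl
      _ < ((N : ℕ) : WithBot ℕ) := by exact_mod_cast (by omega : u.natDegree + i < N)

/-- The core induction: successive `t^{d-1}`-coefficient conditions push down
the degree of `b`. -/
lemma vanish {g : Polynomial Fq} (hg : g.Monic) (hd : 1 ≤ g.natDegree)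
    {b : Polynomial Fq} (hb : b.degree < g.degree) :
    ∀ n, n ≤ g.natDegree →
      (∀ i, i < n → ((b * X ^ i) %ₘ g).coeff (g.natDegree - 1) = 0) →
      ∀ m, g.natDegree - n ≤ m → b.coeff m = 0 := by
  intro n
  induction n with
  | zero =>
    intro _ _ m hm
    refine Polynomial.coeff_eq_zero_of_degree_lt (lt_of_lt_of_le hb ?_)
    rw [Polynomial.degree_eq_natDegree hg.ne_zero]
    exact_mod_cast (by omega : g.natDegree ≤ m)
  | succ n ih =>
    intro hn h m hm
    have ihh := ih (by omega) (fun i hi => h i (by omega))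
    rcases le_or_gt (g.natDegree - n) m with hc | hc
    · exact ihh m hc
    · have hmeq : m = g.natDegree - 1 - n := by omega
      have hdegb : b.degree < ((g.natDegree - n : ℕ) : WithBot ℕ) :=
        (Polynomial.degree_lt_iff_coeff_zero _ _).mpr fun m' hm' => ihh m' (by exact_mod_cast hm')
      have hmod : (b * X ^ n) %ₘ g = b * X ^ n := by
        rw [Polynomial.modByMonic_eq_self_iff hg]
        rw [Polynomial.degree_eq_natDegree hg.ne_zero]
        exact degree_mul_X_pow_lt hdegb (by omega)
      have := h n (by omega)
      rw [hmod, Polynomial.coeff_mul_X_pow'] at this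
      rw [if_pos (by omega : n ≤ g.natDegree - 1)] at this
      rw [hmeq]
      exact this

end poly

set_option linter.unusedSectionVars false
section count
variable {Fq : Type} [Field Fq] [Fintype Fq]

/-- Full `t^{-1}` coefficient of `ξ u`. -/
noncomputable def FF (a g : Polynomial Fq) (φ : ℕ → Fq) (u : Polynomial Fq) : Fq :=
  resCoeff (a * u) g + Lsum φ u

lemma FF_sub {g : Polynomial Fq} (hg : g.Monic) (a : Polynomial Fq) (φ : ℕ → Fq)
    (u v : Polynomial Fq) : FF a g φ (u - v) = FF a g φ u - FF a g φ v := by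
  simp only [FF, resCoeff_eq _ hg, Lsum_sub, mul_sub, Polynomial.sub_modByMonic,
    Polynomial.coeff_sub]
  ring

lemma FF_add {g : Polynomial Fq} (hg : g.Monic) (a : Polynomial Fq) (φ : ℕ → Fq)
    (u v : Polynomial Fq) : FF a g φ (u + v) = FF a g φ u + FF a g φ v := by
  simp only [FF, resCoeff_eq _ hg, Lsum_add, mul_add, Polynomial.add_modByMonic,
    Polynomial.coeff_add]
  ring

lemma FF_C_mul {g : Polynomial Fq} (hg : g.Monic) (a : Polynomial Fq) (φ : ℕ → Fq)
    (c : Fq) (u : Polynomial Fq) : FF a g φ (C c * u) = c * FF a g φ u := by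
  have h1 : a * (C c * u) = C c * (a * u) := by ring
  have h2 : (C c * (a * u)) %ₘ g = C c * ((a * u) %ₘ g) := by
    rw [← Polynomial.smul_eq_C_mul, ← Polynomial.smul_eq_C_mul, Polynomial.smul_modByMonic]
  rw [FF, FF, h1, resCoeff_eq _ hg, resCoeff_eq _ hg, h2, Lsum_C_mul, Polynomial.coeff_C_mul]
  ring

/-- difference of two monic polynomials of the same degree has small degree -/
lemma monic_sub_degree_lt {f f0 : Polynomial Fq} {k : ℕ} (hf : f.Monic) (hf0 : f0.Monic)
    (h1 : f.natDegree = k) (h2 : f0.natDegree = k) :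
    (f - f0).degree < ((k : ℕ) : WithBot ℕ) := by
  refine (Polynomial.degree_lt_iff_coeff_zero _ _).mpr fun m hm => ?_
  have hm' : k ≤ m := by exact_mod_cast hm
  rw [Polynomial.coeff_sub]
  rcases eq_or_lt_of_le hm' with rfl | hlt
  · rw [← h1, hf.coeff_natDegree, h1, ← h2, hf0.coeff_natDegree]
    ring
  · rw [Polynomial.coeff_eq_zero_of_natDegree_lt (by omega),
      Polynomial.coeff_eq_zero_of_natDegree_lt (by omega), sub_zero]

/-- any set of monic polynomials of degree `k` has at most `q^k` elements -/
lemma card_monic_le {k : ℕ} {M : Finset (Polynomial Fq)}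
    (hM : ∀ f ∈ M, f.Monic ∧ f.natDegree = k) :
    M.card ≤ Fintype.card Fq ^ k := by
  classical
  have : M.card ≤ (Finset.univ : Finset (Fin k → Fq)).card := by
    refine Finset.card_le_card_of_injOn (fun f (m : Fin k) => f.coeff m)
      (fun _ _ => Finset.mem_univ _) ?_
    intro f1 h1 f2 h2 heq
    obtain ⟨hm1, hd1⟩ := hM f1 h1
    obtain ⟨hm2, hd2⟩ := hM f2 h2
    have hsub : (f1 - f2).degree < ((k : ℕ) : WithBot ℕ) :=
      monic_sub_degree_lt hm1 hm2 hd1 hd2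
    have : f1 - f2 = 0 := by
      ext m
      rcases lt_or_ge m k with hmk | hmk
      · have := congrFun heq ⟨m, hmk⟩
        simp only [Polynomial.coeff_sub, Polynomial.coeff_zero]
        simpa [sub_eq_zero] using this
      · rw [Polynomial.coeff_zero]
        exact (Polynomial.degree_lt_iff_coeff_zero _ _).mp hsub m (by exact_mod_cast hmk)
    have := sub_eq_zero.mp this
    exact this
  simpa using this

end count

section count2
variable {Fq : Type} [Field Fq] [Fintype Fq] {a g : Polynomial Fq} {φ : ℕ → Fq}

lemma keyvanish (hg : g.Monic) (hd : 1 ≤ g.natDegree)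
    (hφ : ∀ i, i + 1 < 2 * g.natDegree → φ i = 0)
    (u : Polynomial Fq) (n : ℕ) (hn : n ≤ g.natDegree)
    (hcond : ∀ i, i < n → FF a g φ (u * X ^ i) = 0)
    (hdeg : ∀ i, i < n → (u * X ^ i).degree < ((2 * g.natDegree - 1 : ℕ) : WithBot ℕ)) :
    ∀ m, g.natDegree - n ≤ m → ((a * u) %ₘ g).coeff m = 0 := by
  refine vanish hg hd (Polynomial.degree_modByMonic_lt _ hg) n hn (fun i hi => ?_)
  have h1 : ((a * u %ₘ g) * X ^ i) %ₘ g = (a * (u * X ^ i)) %ₘ g := by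
    rw [modmul hg, mul_assoc]
  rw [h1]
  have h2 := hcond i hi
  rw [FF, resCoeff_eq _ hg, Lsum_eq_zero hφ (hdeg i hi) hd, add_zero] at h2
  exact h2

lemma g_dvd (hg : g.Monic) (hco : IsCoprime a g) {u : Polynomial Fq}
    (h : (a * u) %ₘ g = 0) : g ∣ u := by
  have : g ∣ a * u := (Polynomial.modByMonic_eq_zero_iff_dvd hg).mp h
  exact (hco.symm.dvd_of_dvd_mul_left this)

lemma countC1 (hg : g.Monic) (hco : IsCoprime a g)
    (hφ : ∀ i, i + 1 < 2 * g.natDegree → φ i = 0)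
    (hd : 1 ≤ g.natDegree) {k j : ℕ} (hk : k < g.natDegree) (hj : g.natDegree ≤ j)
    (T : Finset (Polynomial Fq))
    (hT : ∀ f ∈ T, f.Monic ∧ f.natDegree = k ∧ ∀ i, i < j → FF a g φ (f * X ^ i) = 0) :
    T = ∅ := by
  by_contra hne
  obtain ⟨f, hf⟩ := Finset.nonempty_of_ne_empty hne
  obtain ⟨hmon, hdeg, hcond⟩ := hT f hf
  have hdegf : f.degree < ((k + 1 : ℕ) : WithBot ℕ) := by
    rw [Polynomial.degree_eq_natDegree hmon.ne_zero, hdeg]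
    exact_mod_cast Nat.lt_succ_self k
  have hvan := keyvanish hg hd hφ f g.natDegree le_rfl
    (fun i hi => hcond i (by omega))
    (fun i hi => degree_mul_X_pow_lt hdegf (by omega))
  have hzero : (a * f) %ₘ g = 0 := by
    ext m
    simpa using hvan m (by omega)
  have hdvd := g_dvd hg hco hzero
  have := Polynomial.natDegree_le_of_dvd hdvd hmon.ne_zero
  omega

lemma countC2 (hg : g.Monic) (hco : IsCoprime a g)
    (hφ : ∀ i, i + 1 < 2 * g.natDegree → φ i = 0)
    (hd : 1 ≤ g.natDegree) {k j : ℕ} (hk : k < g.natDegree) (hj : j < g.natDegree)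
    (T : Finset (Polynomial Fq))
    (hT : ∀ f ∈ T, f.Monic ∧ f.natDegree = k ∧ ∀ i, i < j → FF a g φ (f * X ^ i) = 0) :
    T.card ≤ Fintype.card Fq ^ (g.natDegree - j) := by
  classical
  rcases T.eq_empty_or_nonempty with rfl | ⟨f0, hf0⟩
  · simp
  obtain ⟨hm0, hd0, _⟩ := hT f0 hf0
  set d := g.natDegree with hdd
  have key : ∀ f ∈ T, ∀ m, d - j ≤ m → ((a * (f - f0)) %ₘ g).coeff m = 0 := by
    intro f hf m hm
    obtain ⟨hm1, hd1, hc1⟩ := hT f hf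
    refine keyvanish hg hd hφ (f - f0) j (by omega) (fun i hi => ?_) (fun i hi => ?_) m hm
    · rw [sub_mul, FF_sub hg, hc1 i hi, (hT f0 hf0).2.2 i hi, sub_zero]
    · exact degree_mul_X_pow_lt (monic_sub_degree_lt hm1 hm0 hd1 hd0) (by omega)
  have hinj : T.card ≤ (Finset.univ : Finset (Fin (d - j) → Fq)).card := by
    refine Finset.card_le_card_of_injOn
      (fun f (m : Fin (d - j)) => ((a * (f - f0)) %ₘ g).coeff m)
      (fun _ _ => Finset.mem_univ _) ?_
    intro f1 h1 f2 h2 heq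
    obtain ⟨hm1, hd1, _⟩ := hT f1 h1
    obtain ⟨hm2, hd2, _⟩ := hT f2 h2
    have hB : (a * (f1 - f2)) %ₘ g
        = (a * (f1 - f0)) %ₘ g - (a * (f2 - f0)) %ₘ g := by
      rw [← Polynomial.sub_modByMonic]
      congr 1
      ring
    have hzero : (a * (f1 - f2)) %ₘ g = 0 := by
      ext m
      rw [hB, Polynomial.coeff_sub, Polynomial.coeff_zero]
      rcases lt_or_ge m (d - j) with hmd | hmd
      · have := congrFun heq ⟨m, hmd⟩
        simpa [sub_eq_zero] using this
      · rw [key f1 h1 m hmd, key f2 h2 m hmd, sub_zero]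
    have hdvd := g_dvd hg hco hzero
    by_contra hne
    have hu0 : f1 - f2 ≠ 0 := sub_ne_zero.mpr hne
    have hle := Polynomial.natDegree_le_of_dvd hdvd hu0
    have hlt : (f1 - f2).natDegree < k :=
      (Polynomial.natDegree_lt_iff_degree_lt hu0).mpr (monic_sub_degree_lt hm1 hm2 hd1 hd2)
    omega
  simpa using hinj

end count2

section count3
variable {Fq : Type} [Field Fq] [Fintype Fq] {a g : Polynomial Fq} {φ : ℕ → Fq}

lemma countC3 (hg : g.Monic) (hco : IsCoprime a g)
    (hφ : ∀ i, i + 1 < 2 * g.natDegree → φ i = 0)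
    (hd : 1 ≤ g.natDegree) {k j : ℕ} (hk : g.natDegree ≤ k)
    (T : Finset (Polynomial Fq))
    (hT : ∀ f ∈ T, f.Monic ∧ f.natDegree = k ∧ ∀ i, i < j → FF a g φ (f * X ^ i) = 0) :
    T.card ≤ Fintype.card Fq ^ (k - min j g.natDegree) := by
  classical
  rcases T.eq_empty_or_nonempty with rfl | ⟨f0, hf0⟩
  · simp
  obtain ⟨hm0, hd0, _⟩ := hT f0 hf0
  set d := g.natDegree with hdd
  set j' := min j d with hj'
  set A := min k (2 * d - j') with hA
  have hAd : d ≤ A := by omega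
  have hAk : A ≤ k := by omega
  have hj'd : j' ≤ d := by omega
  have hinj : T.card ≤ (Finset.univ :
      Finset ((Fin (k - A) → Fq) × (Fin (A - d) → Fq) × (Fin (d - j') → Fq))).card := by
    refine Finset.card_le_card_of_injOn
      (fun f => (fun m : Fin (k - A) => (f - f0).coeff (A + (m : ℕ)),
                 fun m : Fin (A - d) => ((f - f0) /ₘ g).coeff m,
                 fun m : Fin (d - j') => ((a * (f - f0)) %ₘ g).coeff m))
      (fun _ _ => Finset.mem_univ _) ?_
    intro f1 h1 f2 h2 heq
    obtain ⟨hm1, hd1, hc1⟩ := hT f1 h1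
    obtain ⟨hm2, hd2, hc2⟩ := hT f2 h2
    simp only [Prod.mk.injEq] at heq
    obtain ⟨heq1, heq2, heq3⟩ := heq
    set u := f1 - f2 with hu
    -- u has all coefficients ≥ A vanishing
    have ucoeff : ∀ m, A ≤ m → u.coeff m = 0 := by
      intro m hm
      rcases lt_or_ge m k with hmk | hmk
      · have := congrFun heq1 ⟨m - A, by omega⟩
        simp only at this
        have hrw : A + (m - A) = m := by omega
        rw [hrw] at this
        have : (f1 - f0).coeff m = (f2 - f0).coeff m := this
        have huc : u.coeff m = (f1 - f0).coeff m - (f2 - f0).coeff m := by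
          simp [hu, Polynomial.coeff_sub]
        rw [huc, this, sub_self]
      · exact (Polynomial.degree_lt_iff_coeff_zero _ _).mp
          (monic_sub_degree_lt hm1 hm2 hd1 hd2) m (by exact_mod_cast hmk)
    have hdegu : u.degree < ((A : ℕ) : WithBot ℕ) :=
      (Polynomial.degree_lt_iff_coeff_zero _ _).mpr fun m hm => ucoeff m (by exact_mod_cast hm)
    -- vanishing of (a*u) %ₘ g
    have hvanu : ∀ m, d - j' ≤ m → ((a * u) %ₘ g).coeff m = 0 := by
      refine keyvanish hg hd hφ u j' (by omega) (fun i hi => ?_) (fun i hi => ?_)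
      · rw [hu, sub_mul, FF_sub hg, hc1 i (by omega), hc2 i (by omega), sub_zero]
      · exact degree_mul_X_pow_lt hdegu (by omega)
    have hB : (a * u) %ₘ g = (a * (f1 - f0)) %ₘ g - (a * (f2 - f0)) %ₘ g := by
      rw [← Polynomial.sub_modByMonic]
      congr 1
      rw [hu]
      ring
    have hzero : (a * u) %ₘ g = 0 := by
      ext m
      rw [Polynomial.coeff_zero]
      rcases lt_or_ge m (d - j') with hmd | hmd
      · rw [hB, Polynomial.coeff_sub]
        have := congrFun heq3 ⟨m, hmd⟩
        simpa [sub_eq_zero] using this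
      · exact hvanu m hmd
    have hdvd := g_dvd hg hco hzero
    -- u = g * w'
    set w' := (f1 - f0) /ₘ g - (f2 - f0) /ₘ g with hw'
    have humod : u %ₘ g = 0 := (Polynomial.modByMonic_eq_zero_iff_dvd hg).mpr hdvd
    have hueq : u = g * w' := by
      have e1 := Polynomial.modByMonic_add_div (f1 - f0) g
      have e2 := Polynomial.modByMonic_add_div (f2 - f0) g
      have e3 : u %ₘ g = (f1 - f0) %ₘ g - (f2 - f0) %ₘ g := by
        rw [← Polynomial.sub_modByMonic]
        congr 1
        rw [hu]
        ring
      have : u = ((f1 - f0) %ₘ g - (f2 - f0) %ₘ g) + g * w' := by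
        rw [hw', mul_sub]
        rw [hu]
        linear_combination e2 - e1
      rw [this, ← e3, humod, zero_add]
    have hw'zero : w' = 0 := by
      by_cases hw0 : w' = 0
      · exact hw0
      · exfalso
        have hdegw : w'.natDegree < A - d := by
          have hgne := hg.ne_zero
          have hdu : u.degree = g.degree + w'.degree := by
            rw [hueq, Polynomial.degree_mul]
          have hune : u ≠ 0 := by
            rw [hueq]
            exact mul_ne_zero hgne hw0
          rw [Polynomial.degree_eq_natDegree hune, Polynomial.degree_eq_natDegree hgne,
            Polynomial.degree_eq_natDegree hw0] at hdu
          have hdu' : u.natDegree = d + w'.natDegree := by exact_mod_cast hdu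
          have : u.natDegree < A := (Polynomial.natDegree_lt_iff_degree_lt hune).mpr hdegu
          omega
        have : ∀ m, w'.coeff m = 0 := by
          intro m
          rcases lt_or_ge m (A - d) with hmA | hmA
          · have := congrFun heq2 ⟨m, hmA⟩
            simp only at this
            rw [hw', Polynomial.coeff_sub, this, sub_self]
          · exact Polynomial.coeff_eq_zero_of_natDegree_lt (by omega)
        exact hw0 (Polynomial.ext fun m => by rw [this m, Polynomial.coeff_zero])
    have : u = 0 := by rw [hueq, hw'zero, mul_zero]
    exact sub_eq_zero.mp this
  have hcard : (Finset.univ :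
      Finset ((Fin (k - A) → Fq) × (Fin (A - d) → Fq) × (Fin (d - j') → Fq))).card
      = Fintype.card Fq ^ (k - j') := by
    simp only [Finset.card_univ, Fintype.card_prod, Fintype.card_fun, Fintype.card_fin]
    rw [← pow_add, ← pow_add]
    congr 1
    omega
  rw [hcard] at hinj
  exact hinj

end count3

section stepA
variable {Fq : Type} [Field Fq] [Fintype Fq] (p : ℕ) [Fact p.Prime] [CharP Fq p]
  [Algebra (ZMod p) Fq] {a g : Polynomial Fq} {φ : ℕ → Fq}

lemma translate_mem {j : ℕ} {h v : Polynomial Fq} (hm : h.Monic) (hdeg : h.natDegree = j)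
    (hv : v.degree < ((j : ℕ) : WithBot ℕ)) : (h + v).Monic ∧ (h + v).natDegree = j := by
  have hdh : h.degree = ((j : ℕ) : WithBot ℕ) := by
    rw [Polynomial.degree_eq_natDegree hm.ne_zero, hdeg]
  have h1 : v.degree < h.degree := by rw [hdh]; exact hv
  refine ⟨hm.add_of_left h1, ?_⟩
  exact Polynomial.natDegree_eq_of_degree_eq_some
    ((Polynomial.degree_add_eq_left_of_degree_lt h1).trans hdh)

lemma stepA (hg : g.Monic) {j : ℕ} {Mj : Finset (Polynomial Fq)}
    (hMj : ∀ h, h ∈ Mj ↔ h.Monic ∧ h.natDegree = j)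
    (f : Polynomial Fq) {i : ℕ} (hi : i < j) (hc : FF a g φ (f * X ^ i) ≠ 0) :
    ∑ h ∈ Mj, eChar p (FF a g φ (f * h)) = 0 := by
  obtain ⟨y, hy⟩ := eChar_ne_one p (Fq := Fq)
  set c := FF a g φ (f * X ^ i) with hcdef
  set v : Polynomial Fq := C (y * c⁻¹) * X ^ i with hv
  have hvdeg : v.degree < ((j : ℕ) : WithBot ℕ) :=
    lt_of_le_of_lt (Polynomial.degree_C_mul_X_pow_le i _) (by exact_mod_cast hi)
  have hset : Mj.map (addLeftEmbedding v) = Mj := by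
    ext h'
    simp only [Finset.mem_map, addLeftEmbedding_apply]
    constructor
    · rintro ⟨h, hh, rfl⟩
      obtain ⟨hm, hd⟩ := (hMj h).mp hh
      rw [add_comm]
      exact (hMj _).mpr (translate_mem hm hd hvdeg)
    · intro hh'
      obtain ⟨hm, hd⟩ := (hMj h').mp hh'
      refine ⟨h' - v, ?_, by ring⟩
      refine (hMj _).mpr ?_
      have heq : h' - v = h' + (-v) := by ring
      rw [heq]
      exact translate_mem hm hd (by rw [Polynomial.degree_neg]; exact hvdeg)
  have key : ∀ h : Polynomial Fq, FF a g φ (f * (v + h)) = y + FF a g φ (f * h) := by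
    intro h
    have h1 : f * (v + h) = C (y * c⁻¹) * (f * X ^ i) + f * h := by rw [hv]; ring
    rw [h1, FF_add hg, FF_C_mul hg, ← hcdef]
    congr 1
    field_simp
  have hS : ∑ h ∈ Mj, eChar p (FF a g φ (f * h))
      = eChar p y * ∑ h ∈ Mj, eChar p (FF a g φ (f * h)) := by
    conv_lhs => rw [← hset, Finset.sum_map]
    simp only [addLeftEmbedding_apply, key, eChar_add p]
    rw [← Finset.mul_sum]
  have h2 : (1 - eChar p y) * ∑ h ∈ Mj, eChar p (FF a g φ (f * h)) = 0 := by
    rw [sub_mul, one_mul]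
    exact sub_eq_zero.mpr hS
  exact (mul_eq_zero.mp h2).resolve_left (sub_ne_zero.mpr fun hcon => hy hcon.symm)

end stepA


/-- Double exponential sum bound: for `ξ = a/g + γ` with `gcd(a,g) = 1` and
`|γ| ≤ 1/|g|²` (the coefficient of `t^{-(i+1)}` in `γ` is `φ i`, vanishing for
`i + 1 < 2·deg g`),
`∑_{f ∈ M(k)} |∑_{h ∈ M(j)} e(ξ·f·h)| ≪ q^{k+j}/|g| + q^k + |g|`, with an
absolute implied constant. Here the `t^{-1}` coefficient of `ξ·f·h` equals
`resCoeff (a·f·h) g + ∑ᵢ (fh)ᵢ·φ i`. -/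
theorem double_exp_sum_minor_arc :
    ∃ C : ℝ, 0 < C ∧
      ∀ (Fq : Type) [Field Fq] [Fintype Fq] (p : ℕ) [Fact p.Prime] [CharP Fq p]
        [Algebra (ZMod p) Fq]
        (a g : Polynomial Fq), g.Monic → IsCoprime a g →
        ∀ (φ : ℕ → Fq), (∀ i, i + 1 < 2 * g.natDegree → φ i = 0) →
        ∀ (k j : ℕ) (Mk Mj : Finset (Polynomial Fq)),
        (∀ f, f ∈ Mk ↔ f.Monic ∧ f.natDegree = k) →
        (∀ h, h ∈ Mj ↔ h.Monic ∧ h.natDegree = j) →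
        ∑ f ∈ Mk, ‖(∑ h ∈ Mj,
            eChar p (resCoeff (a * (f * h)) g +
              ∑ i ∈ (f * h).support, (f * h).coeff i * φ i))‖ ≤
          C * ((Fintype.card Fq : ℝ) ^ (k + j) / (Fintype.card Fq : ℝ) ^ g.natDegree +
            (Fintype.card Fq : ℝ) ^ k + (Fintype.card Fq : ℝ) ^ g.natDegree) := by
  classical
  refine ⟨1, one_pos, ?_⟩
  intro Fq _ _ p _ _ _ a g hg hco φ hφ k j Mk Mj hMk hMj
  have hrw : ∀ f h : Polynomial Fq,
      (resCoeff (a * (f * h)) g + ∑ i ∈ (f * h).support, (f * h).coeff i * φ i)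
        = FF a g φ (f * h) := fun f h => rfl
  simp only [hrw]
  set d := g.natDegree with hd
  set q := Fintype.card Fq with hq
  have hq1 : 1 ≤ q := Fintype.card_pos
  have hQ0 : (0:ℝ) < (q:ℝ) := by exact_mod_cast hq1
  -- the filtered set
  set P : Polynomial Fq → Prop := fun f => ∀ i, i < j → FF a g φ (f * X ^ i) = 0 with hP
  set T : Finset (Polynomial Fq) := Mk.filter P with hT
  have hTmem : ∀ f ∈ T, f.Monic ∧ f.natDegree = k ∧ ∀ i, i < j → FF a g φ (f * X ^ i) = 0 := by
    intro f hf
    rw [hT, Finset.mem_filter] at hf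
    obtain ⟨h1, h2⟩ := hf
    obtain ⟨hm, hdeg⟩ := (hMk f).mp h1
    exact ⟨hm, hdeg, h2⟩
  -- Step B : the LHS is at most T.card * q^j
  have hMjcard : Mj.card ≤ q ^ j := card_monic_le (fun h hh => (hMj h).mp hh)
  have hLHS : ∑ f ∈ Mk, ‖∑ h ∈ Mj, eChar p (FF a g φ (f * h))‖
      ≤ (T.card : ℝ) * (q ^ j : ℕ) := by
    rw [← Finset.sum_filter_add_sum_filter_not Mk P]
    have hzero : ∑ f ∈ Mk.filter (fun f => ¬ P f),
        ‖∑ h ∈ Mj, eChar p (FF a g φ (f * h))‖ = 0 := by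
      refine Finset.sum_eq_zero fun f hf => ?_
      rw [Finset.mem_filter] at hf
      have hfn : ¬ (∀ i, i < j → FF a g φ (f * X ^ i) = 0) := hf.2
      push_neg at hfn
      obtain ⟨i, hi, hne⟩ := hfn
      rw [stepA p hg hMj f hi hne, norm_zero]
    rw [← hT, hzero, add_zero]
    have hbound : ∀ f ∈ T, ‖∑ h ∈ Mj, eChar p (FF a g φ (f * h))‖
        ≤ ((q ^ j : ℕ) : ℝ) := by
      intro f _
      calc ‖∑ h ∈ Mj, eChar p (FF a g φ (f * h))‖
          ≤ ∑ h ∈ Mj, ‖eChar p (FF a g φ (f * h))‖ :=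
            norm_sum_le _ _
        _ = ∑ h ∈ Mj, (1:ℝ) := Finset.sum_congr rfl fun h _ => abs_eChar p _
        _ = (Mj.card : ℝ) := by rw [Finset.sum_const, nsmul_eq_mul, mul_one]
        _ ≤ ((q ^ j : ℕ) : ℝ) := by exact_mod_cast hMjcard
    calc ∑ f ∈ T, ‖∑ h ∈ Mj, eChar p (FF a g φ (f * h))‖
        ≤ ∑ f ∈ T, ((q ^ j : ℕ) : ℝ) := Finset.sum_le_sum hbound
      _ = (T.card : ℝ) * (q ^ j : ℕ) := by rw [Finset.sum_const, nsmul_eq_mul]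
  rw [one_mul]
  -- nonnegativity of the three RHS terms
  have ht1 : (0:ℝ) ≤ (q:ℝ) ^ (k + j) / (q:ℝ) ^ d := by positivity
  have ht2 : (0:ℝ) ≤ (q:ℝ) ^ k := by positivity
  have ht3 : (0:ℝ) ≤ (q:ℝ) ^ d := by positivity
  -- case analysis
  rcases Nat.eq_zero_or_pos d with hd0 | hd1
  · -- d = 0 : trivial bound
    have hTcard : T.card ≤ q ^ k :=
      le_trans (Finset.card_filter_le _ _) (card_monic_le (fun f hf => (hMk f).mp hf))
    have h1 : ∑ f ∈ Mk, ‖∑ h ∈ Mj, eChar p (FF a g φ (f * h))‖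
        ≤ ((q ^ k * q ^ j : ℕ) : ℝ) := by
      refine le_trans hLHS ?_
      push_cast
      have : (T.card : ℝ) ≤ ((q:ℝ)) ^ k := by exact_mod_cast hTcard
      nlinarith [pow_nonneg hQ0.le j, pow_nonneg hQ0.le k]
    refine le_trans h1 ?_
    have heq : ((q ^ k * q ^ j : ℕ) : ℝ) = (q:ℝ) ^ (k + j) / (q:ℝ) ^ d := by
      rw [hd0]
      push_cast
      rw [pow_zero, div_one, pow_add]
    rw [heq]
    linarith
  · rcases lt_or_ge k d with hkd | hkd
    · -- k < d
      rcases le_or_gt d j with hdj | hdj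
      · -- T is empty
        have hTe : T = ∅ := countC1 hg hco hφ hd1 hkd hdj T hTmem
        refine le_trans hLHS ?_
        rw [hTe]
        simp only [Finset.card_empty, Nat.cast_zero, zero_mul]
        linarith
      · -- j < d : bound q^d
        have hTcard : T.card ≤ q ^ (d - j) := countC2 hg hco hφ hd1 hkd hdj T hTmem
        have h1 : ∑ f ∈ Mk, ‖∑ h ∈ Mj, eChar p (FF a g φ (f * h))‖
            ≤ ((q ^ (d - j) * q ^ j : ℕ) : ℝ) := by
          refine le_trans hLHS ?_
          push_cast
          have : (T.card : ℝ) ≤ ((q:ℝ)) ^ (d - j) := by exact_mod_cast hTcard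
          nlinarith [pow_nonneg hQ0.le j, pow_nonneg hQ0.le (d - j)]
        refine le_trans h1 ?_
        have heq : ((q ^ (d - j) * q ^ j : ℕ) : ℝ) = (q:ℝ) ^ d := by
          push_cast
          rw [← pow_add]
          congr 1
          omega
        rw [heq]
        linarith
    · -- k ≥ d
      have hTcard : T.card ≤ q ^ (k - min j d) := countC3 hg hco hφ hd1 hkd T hTmem
      have h1 : ∑ f ∈ Mk, ‖∑ h ∈ Mj, eChar p (FF a g φ (f * h))‖
          ≤ ((q ^ (k - min j d) * q ^ j : ℕ) : ℝ) := by
        refine le_trans hLHS ?_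
        push_cast
        have : (T.card : ℝ) ≤ ((q:ℝ)) ^ (k - min j d) := by exact_mod_cast hTcard
        nlinarith [pow_nonneg hQ0.le j, pow_nonneg hQ0.le (k - min j d)]
      refine le_trans h1 ?_
      rcases le_or_gt j d with hjd | hjd
      · have heq : ((q ^ (k - min j d) * q ^ j : ℕ) : ℝ) = (q:ℝ) ^ k := by
          push_cast
          rw [← pow_add]
          congr 1
          omega
        rw [heq]
        linarith
      · have heq : ((q ^ (k - min j d) * q ^ j : ℕ) : ℝ)
            = (q:ℝ) ^ (k + j) / (q:ℝ) ^ d := by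
          push_cast
          rw [eq_div_iff (by positivity), ← pow_add, ← pow_add]
          congr 1
          omega
        rw [heq]
        linarith
end

section
/- For α, β ∈ T = {ξ ∈ K_∞ : |ξ| < 1} and integers n ≥ 0, k ≥ 1, the number of monic polynomials f of degree n with ‖αf − β‖ < q^{−k} is at most max{1, q^{n−k}, q^n·‖α‖, q^{−k}/‖α‖}. -/
/-- Counting lemma: for `α, β ∈ T = {ξ : |ξ| < 1}` in `K_∞ = F_q((1/t))`,
represented by their coefficient sequences `φα i = α_{-(i+1)}`,
`φβ i = β_{-(i+1)}`, with `α ≠ 0` and `‖α‖ = q^{-r}` (i.e. `φα (r-1) ≠ 0` and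
`φα i = 0` for `i < r - 1`), the number of monic polynomials `f` of degree `n`
with `‖αf − β‖ < q^{-k}` (i.e. the coefficients of `t^{-(i+1)}` in `αf − β`
vanish for `i < k`) is at most `max {1, q^{n−k}, q^n·‖α‖, q^{-k}/‖α‖}`. -/
theorem count_small_fractional_part
    (Fq : Type) [Field Fq] [Fintype Fq]
    (φα φβ : ℕ → Fq) (n k r : ℕ) (hk : 1 ≤ k) (hr : 1 ≤ r)
    (hα1 : φα (r - 1) ≠ 0) (hα2 : ∀ i, i < r - 1 → φα i = 0)
    (N : Finset (Polynomial Fq))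
    (hN : ∀ f : Polynomial Fq, f ∈ N ↔ f.Monic ∧ f.natDegree = n ∧
      ∀ i < k, (∑ j ∈ f.support, f.coeff j * φα (i + j)) = φβ i) :
    (N.card : ℝ) ≤
      max (max 1 ((Fintype.card Fq : ℝ) ^ ((n : ℤ) - (k : ℤ))))
        (max ((Fintype.card Fq : ℝ) ^ ((n : ℤ) - (r : ℤ)))
          ((Fintype.card Fq : ℝ) ^ ((r : ℤ) - (k : ℤ)))) := by
  classical
  set q := Fintype.card Fq with hq
  set a := r - n with ha
  set b := min k r with hb
  set J : Finset ℕ := (Finset.Ico a b).image (fun i => r - 1 - i) with hJ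
  set S : Finset ℕ := Finset.range n \ J with hS
  have hJsub : J ⊆ Finset.range n := by
    intro j hj
    simp only [hJ, Finset.mem_image, Finset.mem_Ico] at hj
    obtain ⟨i, ⟨hi1, hi2⟩, rfl⟩ := hj
    simp only [Finset.mem_range]
    omega
  have hJcard : J.card = b - a := by
    rw [hJ, Finset.card_image_of_injOn, Nat.card_Ico]
    intro x hx y hy hxy
    simp only [Finset.coe_Ico, Set.mem_Ico] at hx hy
    simp only at hxy
    omega
  have hScard : S.card = n - (b - a) := by
    rw [hS, Finset.card_sdiff_of_subset hJsub, Finset.card_range, hJcard]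
  have hsum : ∀ f ∈ N, ∀ i < k,
      (∑ j ∈ Finset.range (n+1), f.coeff j * φα (i + j)) = φβ i := by
    intro f hf i hi
    obtain ⟨hmon, hdeg, heq⟩ := (hN f).1 hf
    rw [← heq i hi]
    apply (Finset.sum_subset ?_ ?_).symm
    · intro j hj
      have := Polynomial.supp_subset_range_natDegree_succ hj
      rwa [hdeg] at this
    · intro j _ hj
      rw [Polynomial.notMem_support_iff.1 hj, zero_mul]
  have hinj : ∀ f ∈ N, ∀ g ∈ N, (∀ j ∈ S, f.coeff j = g.coeff j) → f = g := by
    intro f hf g hg hfg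
    obtain ⟨hmf, hdf, _⟩ := (hN f).1 hf
    obtain ⟨hmg, hdg, _⟩ := (hN g).1 hg
    set c : ℕ → Fq := fun j => f.coeff j - g.coeff j with hc
    have hcn : c n = 0 := by
      have h1 : f.coeff n = 1 := by rw [← hdf]; exact hmf.coeff_natDegree
      have h2 : g.coeff n = 1 := by rw [← hdg]; exact hmg.coeff_natDegree
      simp [hc, h1, h2]
    have hgt : ∀ j, n < j → c j = 0 := by
      intro j hj
      have h1 : f.coeff j = 0 := Polynomial.coeff_eq_zero_of_natDegree_lt (by rw [hdf]; exact hj)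
      have h2 : g.coeff j = 0 := Polynomial.coeff_eq_zero_of_natDegree_lt (by rw [hdg]; exact hj)
      simp [hc, h1, h2]
    have hcS : ∀ j ∈ S, c j = 0 := fun j hj => by simp [hc, hfg j hj]
    have hhom : ∀ i < k, (∑ j ∈ Finset.range (n+1), c j * φα (i + j)) = 0 := by
      intro i hi
      simp only [hc, sub_mul]
      rw [Finset.sum_sub_distrib, hsum f hf i hi, hsum g hg i hi, sub_self]
    have key : ∀ i, a ≤ i → i < b → c (r - 1 - i) = 0 := by
      intro i
      induction i using Nat.strong_induction_on with
      | _ i ih =>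
        intro hi1 hi2
        have hmem : r - 1 - i ∈ Finset.range (n+1) := by
          simp only [Finset.mem_range]; omega
        have hzero : ∀ j ∈ Finset.range (n+1), j ≠ r - 1 - i →
            c j * φα (i + j) = 0 := by
          intro j hjr hjne
          simp only [Finset.mem_range] at hjr
          by_cases hjJ : j ∈ J
          · simp only [hJ, Finset.mem_image, Finset.mem_Ico] at hjJ
            obtain ⟨i', ⟨hi'1, hi'2⟩, rfl⟩ := hjJ
            rcases lt_trichotomy i' i with h | h | h
            · rw [ih i' h hi'1 hi'2, zero_mul]
            · exfalso; exact hjne (by omega)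
            · rw [hα2 (i + (r - 1 - i')) (by omega), mul_zero]
          · rcases Nat.lt_or_ge j n with h | h
            · have hjS : j ∈ S := by
                simp only [hS, Finset.mem_sdiff, Finset.mem_range]
                exact ⟨h, hjJ⟩
              rw [hcS j hjS, zero_mul]
            · have hjn : j = n := by omega
              rw [hjn, hcn, zero_mul]
        have heq0 := hhom i (by omega)
        rw [Finset.sum_eq_single_of_mem _ hmem hzero] at heq0
        have hri : i + (r - 1 - i) = r - 1 := by omega
        rw [hri] at heq0
        exact (mul_eq_zero.1 heq0).resolve_right hα1
    ext j
    rcases Nat.lt_trichotomy j n with h | h | h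
    · by_cases hjJ : j ∈ J
      · simp only [hJ, Finset.mem_image, Finset.mem_Ico] at hjJ
        obtain ⟨i, ⟨hi1, hi2⟩, rfl⟩ := hjJ
        have := key i hi1 hi2
        simpa [hc, sub_eq_zero] using this
      · exact hfg j (by simp only [hS, Finset.mem_sdiff, Finset.mem_range]; exact ⟨h, hjJ⟩)
    · have h1 : f.coeff j = 1 := by rw [h, ← hdf]; exact hmf.coeff_natDegree
      have h2 : g.coeff j = 1 := by rw [h, ← hdg]; exact hmg.coeff_natDegree
      rw [h1, h2]
    · have := hgt j h
      simpa [hc, sub_eq_zero] using this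
  have hcard : N.card ≤ q ^ S.card := by
    calc N.card ≤ (Finset.univ : Finset (↥S → Fq)).card := by
          apply Finset.card_le_card_of_injOn (fun f (x : ↥S) => f.coeff x)
            (fun f _ => Finset.mem_univ _)
          intro f hf g hg hfg
          exact hinj f hf g hg (fun j hj => congrFun hfg ⟨j, hj⟩)
      _ = q ^ S.card := by
          rw [Finset.card_univ, Fintype.card_fun, Fintype.card_coe]
  have hq1 : (1:ℝ) ≤ (q:ℝ) := by
    have : 1 ≤ q := Fintype.card_pos
    exact_mod_cast this
  have hmono : Monotone (fun z : ℤ => (q:ℝ) ^ z) := fun x y hxy =>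
    zpow_le_zpow_right₀ hq1 hxy
  have hS_le : (S.card : ℤ) ≤ max (max 0 ((n:ℤ) - k)) (max ((n:ℤ) - r) ((r:ℤ) - k)) := by
    rw [hScard]; omega
  calc (N.card : ℝ) ≤ (q:ℝ) ^ ((S.card : ℕ) : ℤ) := by
        rw [zpow_natCast]; exact_mod_cast hcard
    _ ≤ (q:ℝ) ^ (max (max 0 ((n:ℤ)-k)) (max ((n:ℤ)-r) ((r:ℤ)-k))) := hmono hS_le
    _ = _ := by
        rw [hmono.map_max, hmono.map_max, hmono.map_max, zpow_zero]
end
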